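/- arXiv:2307.13780 — 7 statements merged into one kernel-verified Lean document; each statement's English description precedes it below -/
import Mathlib

section
/- Let S be a nondegenerate n-dimensional simplex in R^n with basic Lagrange polynomials λ_1,...,λ_{n+1} (the affine functions with λ_j(v_k) = δ_{jk} at the vertices v_k of S), and let Ω ⊂ R^n be a compact set with Ω ⊄ S. Then the absorption coefficient ξ(Ω;S) := min{σ ≥ 1 : Ω ⊂ σS} (where σS denotes the homothety of S with ratio σ about its centroid) satisfies ξ(Ω;S) = (n+1)·max_{1≤k≤n+1} max_{x∈Ω} (−λ_k(x)) + 1. -/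
/-- The (solid) simplex with vertices `v`. -/
noncomputable def simplexHull {n : ℕ} (v : Fin (n+1) → (Fin n → ℝ)) : Set (Fin n → ℝ) :=
  convexHull ℝ (Set.range v)

/-- The homothetic copy `σS` of the simplex with vertices `v`, with ratio `σ`
about the centroid. -/
noncomputable def scaledSimplex {n : ℕ} (v : Fin (n+1) → (Fin n → ℝ)) (σ : ℝ) :
    Set (Fin n → ℝ) :=
  AffineMap.homothety (Finset.univ.centroid ℝ v) σ '' simplexHull v

/-- The absorption coefficient `ξ(Ω; S)` of `Ω` by the simplex with vertices `v`. -/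
noncomputable def absCoef {n : ℕ} (Ω : Set (Fin n → ℝ)) (v : Fin (n+1) → (Fin n → ℝ)) : ℝ :=
  sInf {σ : ℝ | 1 ≤ σ ∧ Ω ⊆ scaledSimplex v σ}


theorem absCoef_eq_lagrange {n : ℕ} (v : Fin (n+1) → (Fin n → ℝ))
    (hv : AffineIndependent ℝ v)
    (lam : Fin (n+1) → ((Fin n → ℝ) →ᵃ[ℝ] ℝ))
    (hlam : ∀ j k, lam j (v k) = if j = k then 1 else 0)
    (Ω : Set (Fin n → ℝ)) (hΩ : IsCompact Ω)
    (hns : ¬ Ω ⊆ simplexHull v) :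
    absCoef Ω v = (n + 1) * sSup {t : ℝ | ∃ k, ∃ x ∈ Ω, t = -(lam k x)} + 1 := by
  classical
  have hsp : affineSpan ℝ (Set.range v) = ⊤ := by
    rw [hv.affineSpan_eq_top_iff_card_eq_finrank_add_one]
    simp
  let b : AffineBasis (Fin (n+1)) ℝ (Fin n → ℝ) := ⟨v, hv, hsp⟩
  have hb : ⇑b = v := rfl
  have hcoord : ∀ k x, lam k x = b.coord k x := by
    intro k x
    conv_lhs => rw [← b.affineCombination_coord_eq_self x]
    rw [Finset.map_affineCombination _ _ _ (b.sum_coord_apply_eq_one x)]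
    rw [Finset.univ.affineCombination_eq_linear_combination _ _ (b.sum_coord_apply_eq_one x)]
    simp [hb, Function.comp, hlam, eq_comm, Finset.sum_ite_eq]
  have hN : (0:ℝ) < (n:ℝ) + 1 := by positivity
  -- characterization of the simplex
  have hS : simplexHull v = {x | ∀ k, 0 ≤ lam k x} := by
    rw [simplexHull, ← hb, b.convexHull_eq_nonneg_coord]
    ext x
    simp [hcoord]
  set c := Finset.univ.centroid ℝ v with hcdef
  -- value of lam at the centroid
  have hc : ∀ k, lam k c = ((n:ℝ) + 1)⁻¹ := by
    intro k
    rw [hcdef, Finset.centroid_def, hcoord, ← hb,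
      b.coord_apply_combination_of_mem (Finset.mem_univ k)
        (Finset.univ.sum_centroidWeights_eq_one_of_nonempty ℝ ⟨k, Finset.mem_univ k⟩)]
    simp [Finset.centroidWeights_apply]
  -- lam applied to homothety
  have hlh : ∀ k (σ : ℝ) x, lam k (AffineMap.homothety c σ x)
      = σ * (lam k x - ((n:ℝ)+1)⁻¹) + ((n:ℝ)+1)⁻¹ := by
    intro k σ x
    rw [AffineMap.homothety_apply, AffineMap.map_vadd, map_smul,
      AffineMap.linearMap_vsub, hc k]
    simp [vsub_eq_sub, vadd_eq_add, smul_eq_mul]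
  -- membership in the scaled simplex
  have hmem : ∀ (σ : ℝ), σ ≠ 0 → ∀ y,
      (y ∈ scaledSimplex v σ ↔ AffineMap.homothety c σ⁻¹ y ∈ simplexHull v) := by
    intro σ hσ y
    constructor
    · rintro ⟨x, hx, rfl⟩
      rwa [← AffineMap.homothety_mul_apply, inv_mul_cancel₀ hσ, AffineMap.homothety_one,
        AffineMap.id_apply]
    · intro h
      exact ⟨_, h, by
        rw [← AffineMap.homothety_mul_apply, mul_inv_cancel₀ hσ, AffineMap.homothety_one,
          AffineMap.id_apply]⟩
  set T := {t : ℝ | ∃ k, ∃ x ∈ Ω, t = -(lam k x)} with hTdef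
  obtain ⟨y, hyΩ, hyS⟩ := Set.not_subset.mp hns
  rw [hS] at hyS
  simp only [Set.mem_setOf_eq, not_forall, not_le] at hyS
  obtain ⟨k₀, hk₀⟩ := hyS
  have hTne : T.Nonempty := ⟨-(lam k₀ y), k₀, y, hyΩ, rfl⟩
  have hTbdd : BddAbove T := by
    have hsub : T ⊆ ⋃ k ∈ (Set.univ : Set (Fin (n+1))), (fun x => -(lam k x)) '' Ω := by
      rintro t ⟨k, x, hx, rfl⟩
      exact Set.mem_biUnion (Set.mem_univ k) ⟨x, hx, rfl⟩
    refine BddAbove.mono hsub ?_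
    rw [Set.Finite.bddAbove_biUnion Set.finite_univ]
    intro k _
    exact ((hΩ.image ((lam k).continuous_of_finiteDimensional.neg)).bddAbove)
  set M := sSup T with hMdef
  have hM : 0 < M :=
    lt_of_lt_of_le (by linarith) (le_csSup hTbdd ⟨k₀, y, hyΩ, rfl⟩)
  have key : ∀ σ : ℝ, 1 ≤ σ → (Ω ⊆ scaledSimplex v σ ↔ ((n:ℝ)+1)*M + 1 ≤ σ) := by
    intro σ hσ1
    have hσ0 : (0:ℝ) < σ := by linarith
    have e1 : σ * σ⁻¹ = 1 := mul_inv_cancel₀ hσ0.ne'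
    have e2 : ((n:ℝ)+1) * ((n:ℝ)+1)⁻¹ = 1 := mul_inv_cancel₀ hN.ne'
    constructor
    · intro hsub
      have hM' : M ≤ (σ - 1)/((n:ℝ)+1) := by
        apply csSup_le hTne
        rintro t ⟨k, x, hxΩ, rfl⟩
        have hx := (hmem σ hσ0.ne' x).mp (hsub hxΩ)
        rw [hS] at hx
        have h0 := hx k
        rw [hlh] at h0
        rw [le_div_iff₀ hN]
        nlinarith [mul_pos hσ0 hN]
      rw [le_div_iff₀ hN] at hM'
      nlinarith
    · intro hge x hxΩ
      rw [hmem σ hσ0.ne' x, hS]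
      intro k
      rw [hlh]
      have h1 : -(lam k x) ≤ M := le_csSup hTbdd ⟨k, x, hxΩ, rfl⟩
      have h2 : ((n:ℝ)+1) * (-(lam k x)) ≤ σ - 1 := by nlinarith
      nlinarith [mul_pos hσ0 hN, inv_pos.mpr hσ0, inv_pos.mpr hN]
  have hset : {σ : ℝ | 1 ≤ σ ∧ Ω ⊆ scaledSimplex v σ} = Set.Ici (((n:ℝ)+1)*M + 1) := by
    ext σ
    simp only [Set.mem_setOf_eq, Set.mem_Ici]
    constructor
    · rintro ⟨h1, h2⟩
      exact (key σ h1).mp h2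
    · intro h
      have h1 : 1 ≤ σ := by nlinarith
      exact ⟨h1, (key σ h1).mpr h⟩
  rw [absCoef, hset, csInf_Ici]
end

section
/- Let Ω ⊂ R^n be compact, Π = span(φ_1,...,φ_d) a d-dimensional space of monomials with φ_1 ≡ 1, φ_2(x)=x_1,...,φ_{n+1}(x)=x_n, and P : C(Ω) → Π an interpolation projector with admissible nodes x^(j). Let T(x) = (φ_2(x),...,φ_d(x)) and let S ⊂ R^{d−1} be the simplex with vertices T(x^(j)) (assumed nondegenerate). Then (1/2)(1 + 1/(d−1))(‖P‖_Ω − 1) + 1 ≤ ξ(T(Ω); S) ≤ (d/2)(‖P‖_Ω − 1) + 1, where ‖P‖_Ω is the operator norm of P on C(Ω). -/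
/-- A function `ℝ^n → ℝ` is a monomial if it has the form `x ↦ ∏ xᵢ^{αᵢ}`. -/
def IsMonomial {n : ℕ} (φ : (Fin n → ℝ) → ℝ) : Prop :=
  ∃ α : Fin n → ℕ, ∀ x, φ x = ∏ i, x i ^ α i


lemma coord_homothety {m : ℕ} (b : AffineBasis (Fin (m+1)) ℝ (Fin m → ℝ))
    (c z : Fin m → ℝ) (σ : ℝ) (j : Fin (m+1)) :
    b.coord j (AffineMap.homothety c σ z) = σ * (b.coord j z - b.coord j c) + b.coord j c := by
  rw [AffineMap.homothety_eq_lineMap, AffineMap.apply_lineMap]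
  simp [AffineMap.lineMap_apply_module]
  ring

lemma coord_centroid {m : ℕ} (b : AffineBasis (Fin (m+1)) ℝ (Fin m → ℝ)) (j : Fin (m+1)) :
    b.coord j (Finset.univ.centroid ℝ ⇑b) = ((m:ℝ)+1)⁻¹ := by
  rw [b.coord_apply_centroid (Finset.mem_univ j)]
  simp

lemma mem_scaledSimplex_iff {m : ℕ} (b : AffineBasis (Fin (m+1)) ℝ (Fin m → ℝ))
    {σ : ℝ} (hσ : 0 < σ) (y : Fin m → ℝ) :
    y ∈ scaledSimplex (⇑b) σ ↔ ∀ j, (1 - σ)/((m:ℝ)+1) ≤ b.coord j y := by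
  have hm : (0:ℝ) < (m:ℝ)+1 := by positivity
  have hκpos : (0:ℝ) < ((m:ℝ)+1)⁻¹ := by positivity
  set κ : ℝ := ((m:ℝ)+1)⁻¹ with hκdef
  set c := Finset.univ.centroid ℝ ⇑b with hc
  have hκ : ∀ j, b.coord j c = κ := coord_centroid b
  unfold scaledSimplex simplexHull
  rw [b.convexHull_eq_nonneg_coord]
  constructor
  · rintro ⟨z, hz, rfl⟩ j
    rw [coord_homothety, hκ, div_eq_mul_inv, ← hκdef]
    have := hz j
    nlinarith
  · intro h
    refine ⟨AffineMap.homothety c σ⁻¹ y, fun j => ?_, ?_⟩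
    · rw [coord_homothety, hκ]
      have hj := h j
      rw [div_eq_mul_inv, ← hκdef] at hj
      have hinv : (0:ℝ) < σ⁻¹ := by positivity
      set t := b.coord j y
      have h2 : σ⁻¹ * ((1-σ)*κ - κ) ≤ σ⁻¹ * (t - κ) :=
        mul_le_mul_of_nonneg_left (by linarith) hinv.le
      have h3 : σ⁻¹ * ((1-σ)*κ - κ) = -κ := by
        field_simp
        ring
      linarith
    · rw [← AffineMap.homothety_mul_apply, mul_inv_cancel₀ hσ.ne', AffineMap.homothety_one]
      rfl

set_option maxHeartbeats 1600000 in
theorem absCoef_bounds_of_projNorm {n m : ℕ} (hn : n ≤ m)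
    (Ω : Set (Fin n → ℝ)) (hΩ : IsCompact Ω)
    (φ : Fin (m+1) → ((Fin n → ℝ) → ℝ))
    (hmono : ∀ i, IsMonomial (φ i))
    (hind : LinearIndependent ℝ φ)
    (h1 : ∀ x, φ 0 x = 1)
    (hcoord : ∀ (j : Fin n) (x : Fin n → ℝ),
      φ ⟨(j : ℕ) + 1, by have := j.isLt; omega⟩ x = x j)
    (nodes : Fin (m+1) → (Fin n → ℝ)) (hnodes : ∀ j, nodes j ∈ Ω)
    (hadm : (Matrix.of fun i j => φ i (nodes j)).det ≠ 0)
    (lam : Fin (m+1) → ((Fin n → ℝ) → ℝ))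
    (hspan : ∀ j, lam j ∈ Submodule.span ℝ (Set.range φ))
    (hdelta : ∀ j k, lam j (nodes k) = if j = k then 1 else 0)
    (T : (Fin n → ℝ) → (Fin m → ℝ)) (hT : ∀ x i, T x i = φ i.succ x)
    (hSimp : AffineIndependent ℝ (fun j => T (nodes j)))
    (normP : ℝ)
    (hnorm : normP = sSup {s : ℝ | ∃ x ∈ Ω, s = ∑ j, |lam j x|}) :
    (1/2) * (1 + 1/(m : ℝ)) * (normP - 1) + 1
      ≤ absCoef (T '' Ω) (fun j => T (nodes j)) ∧
    absCoef (T '' Ω) (fun j => T (nodes j)) ≤ ((m : ℝ) + 1)/2 * (normP - 1) + 1 := by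
  classical
  have hm1 : (0:ℝ) < (m:ℝ)+1 := by positivity
  have hne : Ω.Nonempty := ⟨nodes 0, hnodes 0⟩
  -- continuity of the monomials
  have hφcont : ∀ i, Continuous (φ i) := by
    intro i
    obtain ⟨α, hα⟩ := hmono i
    have : φ i = fun x => ∏ k, x k ^ α k := funext hα
    rw [this]
    exact continuous_finset_prod _ fun k _ => (continuous_apply k).pow _
  -- representation of lam as combinations of φ
  have hrep : ∀ j, ∃ c : Fin (m+1) → ℝ, ∀ x, lam j x = ∑ i, c i * φ i x := by
    intro j
    obtain ⟨c, hc⟩ := (Submodule.mem_span_range_iff_exists_fun ℝ).mp (hspan j)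
    refine ⟨c, fun x => ?_⟩
    rw [← hc]
    simp [Finset.sum_apply]
  have hlamcont : ∀ j, Continuous (lam j) := by
    intro j
    obtain ⟨c, hc⟩ := hrep j
    have : lam j = fun x => ∑ i, c i * φ i x := funext hc
    rw [this]
    exact continuous_finset_sum _ fun i _ => (continuous_const.mul (hφcont i))
  -- uniqueness: a combination vanishing at all nodes is trivial
  have hzero : ∀ c : Fin (m+1) → ℝ, (∀ k, ∑ i, c i * φ i (nodes k) = 0) → c = 0 := by
    intro c hck
    have hM : IsUnit (Matrix.of fun i j => φ i (nodes j)) := by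
      rw [Matrix.isUnit_iff_isUnit_det]
      exact isUnit_iff_ne_zero.mpr hadm
    have hinj := Matrix.vecMul_injective_iff_isUnit.mpr hM
    have : Matrix.vecMul c (Matrix.of fun i j => φ i (nodes j))
        = Matrix.vecMul 0 (Matrix.of fun i j => φ i (nodes j)) := by
      rw [Matrix.zero_vecMul]
      funext k
      simp only [Matrix.vecMul, dotProduct, Matrix.of_apply, Pi.zero_apply]
      exact hck k
    exact hinj this
  -- the affine basis
  set v : Fin (m+1) → (Fin m → ℝ) := fun j => T (nodes j) with hv
  have htot : affineSpan ℝ (Set.range v) = ⊤ := by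
    rw [hSimp.affineSpan_eq_top_iff_card_eq_finrank_add_one]
    simp [Module.finrank_fin_fun]
  set b : AffineBasis (Fin (m+1)) ℝ (Fin m → ℝ) := ⟨v, hSimp, htot⟩ with hb
  have hbv : ⇑b = v := rfl
  -- lam is the barycentric coordinate of T
  have hlam : ∀ j x, lam j x = b.coord j (T x) := by
    intro j
    obtain ⟨c, hc⟩ := hrep j
    set f := b.coord j with hf
    set e : Fin m → (Fin m → ℝ) := fun i => fun k => if i = k then 1 else 0 with he
    set cg : Fin (m+1) → ℝ := Fin.cases (f 0) (fun i => f.linear (e i)) with hcg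
    have hg : ∀ x, f (T x) = ∑ i, cg i * φ i x := by
      intro x
      have hdec : f (T x) = f.linear (T x) + f 0 := by
        conv_lhs => rw [AffineMap.decomp f]
        simp
      rw [hdec, LinearMap.pi_apply_eq_sum_univ f.linear (T x), Fin.sum_univ_succ]
      simp only [hcg, Fin.cases_zero, Fin.cases_succ, h1 x, mul_one]
      rw [add_comm]
      congr 1
      refine Finset.sum_congr rfl fun i _ => ?_
      rw [hT x i]
      simp [he, mul_comm, smul_eq_mul]
    have hck : ∀ k, ∑ i, (c i - cg i) * φ i (nodes k) = 0 := by
      intro k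
      have h1' : lam j (nodes k) = ∑ i, c i * φ i (nodes k) := hc _
      have h2' : f (T (nodes k)) = ∑ i, cg i * φ i (nodes k) := hg _
      have h3' : f (T (nodes k)) = if j = k then 1 else 0 := by
        have : T (nodes k) = b k := rfl
        rw [this, hf, b.coord_apply]
      have h4' : lam j (nodes k) = f (T (nodes k)) := by rw [hdelta, h3']
      have : ∑ i, (c i - cg i) * φ i (nodes k)
          = ∑ i, c i * φ i (nodes k) - ∑ i, cg i * φ i (nodes k) := by
        rw [← Finset.sum_sub_distrib]
        exact Finset.sum_congr rfl fun i _ => by ring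
      rw [this, ← h1', ← h2', h4', sub_self]
    have hceq : ∀ i, c i = cg i := by
      have := hzero _ hck
      intro i
      have := congrFun this i
      simpa [sub_eq_zero] using this
    intro x
    rw [hc x, hg x]
    exact Finset.sum_congr rfl fun i _ => by rw [hceq i]
  have hsum1 : ∀ x, ∑ j, lam j x = 1 := by
    intro x
    simp only [hlam]
    exact b.sum_coord_apply_eq_one (T x)
  -- maximizers
  have hxc : ∀ j : Fin (m+1), ∃ xj, xj ∈ Ω ∧ ∀ x ∈ Ω, -lam j x ≤ -lam j xj := by
    intro j
    obtain ⟨xj, hxjΩ, hmax⟩ := hΩ.exists_isMaxOn hne ((hlamcont j).neg.continuousOn)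
    exact ⟨xj, hxjΩ, fun x hx => hmax hx⟩
  choose xc hxcΩ hxcmax using hxc
  obtain ⟨js, _, hjmax⟩ := Finset.exists_max_image Finset.univ
    (fun j => -lam j (xc j)) ⟨0, Finset.mem_univ 0⟩
  set L : ℝ := -lam js (xc js) with hLdef
  have hL : ∀ x ∈ Ω, ∀ j, -lam j x ≤ L :=
    fun x hx j => (hxcmax j x hx).trans (hjmax j (Finset.mem_univ j))
  set Lp : ℝ := max L 0 with hLp
  have hLp0 : 0 ≤ Lp := le_max_right _ _
  set ξ : ℝ := 1 + ((m:ℝ)+1) * Lp with hξ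
  have hξ1 : 1 ≤ ξ := by nlinarith
  -- the admissible set is [ξ, ∞)
  have hAset : {σ : ℝ | 1 ≤ σ ∧ T '' Ω ⊆ scaledSimplex v σ} = Set.Ici ξ := by
    ext σ
    simp only [Set.mem_setOf_eq, Set.mem_Ici]
    constructor
    · rintro ⟨hσ1, hsub⟩
      have hσ0 : (0:ℝ) < σ := lt_of_lt_of_le one_pos hσ1
      have hmem : T (xc js) ∈ scaledSimplex v σ :=
        hsub ⟨xc js, hxcΩ js, rfl⟩
      rw [← hbv, mem_scaledSimplex_iff b hσ0] at hmem
      have h5 := hmem js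
      rw [← hlam js (xc js)] at h5
      rw [div_le_iff₀ hm1] at h5
      -- (1-σ) ≤ lam js (xc js) * (m+1)  i.e.  (m+1)*L ≤ σ - 1
      have hLle : ((m:ℝ)+1) * L ≤ σ - 1 := by nlinarith
      have : ((m:ℝ)+1) * Lp ≤ σ - 1 := by
        rcases max_cases L 0 with ⟨hmax, _⟩ | ⟨hmax, _⟩ <;> rw [hLp, hmax] <;> nlinarith
      linarith
    · intro hξσ
      have hσ1 : 1 ≤ σ := le_trans hξ1 hξσ
      have hσ0 : (0:ℝ) < σ := lt_of_lt_of_le one_pos hσ1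
      refine ⟨hσ1, ?_⟩
      rintro y ⟨x, hx, rfl⟩
      rw [← hbv, mem_scaledSimplex_iff b hσ0]
      intro j
      rw [← hlam j x]
      have h1' := hL x hx j
      have h2' : L ≤ Lp := le_max_left _ _
      rw [div_le_iff₀ hm1]
      nlinarith
  have habsCoef : absCoef (T '' Ω) v = ξ := by
    unfold absCoef
    rw [hAset, csInf_Ici]
  -- norm facts
  have hcontS : Continuous (fun x => ∑ j, |lam j x|) :=
    continuous_finset_sum _ fun j _ => (hlamcont j).abs
  obtain ⟨x₀, hx₀Ω, hx₀max⟩ := hΩ.exists_isMaxOn hne hcontS.continuousOn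
  have hnormP : normP = ∑ j, |lam j x₀| := by
    rw [hnorm]
    apply le_antisymm
    · refine csSup_le ⟨∑ j, |lam j x₀|, ⟨x₀, hx₀Ω, rfl⟩⟩ ?_
      rintro s ⟨x, hx, rfl⟩
      exact hx₀max hx
    · refine le_csSup ⟨∑ j, |lam j x₀|, ?_⟩ ⟨x₀, hx₀Ω, rfl⟩
      rintro s ⟨x, hx, rfl⟩
      exact hx₀max hx
  have habs : ∀ x, ∑ j, |lam j x| = 1 + 2 * ∑ j, max 0 (-lam j x) := by
    intro x
    have hterm : ∀ j, |lam j x| = lam j x + 2 * max 0 (-lam j x) := by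
      intro j
      rcases le_or_gt 0 (lam j x) with h | h
      · rw [abs_of_nonneg h, max_eq_left (by linarith)]
        ring
      · rw [abs_of_neg h, max_eq_right (by linarith)]
        ring
    rw [Finset.sum_congr rfl fun j _ => hterm j, Finset.sum_add_distrib, hsum1, ← Finset.mul_sum]
  have hnormP1 : 1 ≤ normP := by
    have h0 : ∑ j, |lam j (nodes 0)| = 1 := by
      have : ∀ j, |lam j (nodes 0)| = if j = (0 : Fin (m+1)) then 1 else 0 := by
        intro j
        rw [hdelta j 0]
        split <;> simp
      rw [Finset.sum_congr rfl fun j _ => this j]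
      simp
    rw [hnormP, ← h0]
    exact hx₀max (hnodes 0)
  -- upper bound for Lp
  have hLup : Lp ≤ (normP - 1)/2 := by
    apply max_le
    · have h1' : L ≤ max 0 (-lam js (xc js)) := le_max_right _ _
      have h2' : max 0 (-lam js (xc js)) ≤ ∑ j, max 0 (-lam j (xc js)) :=
        Finset.single_le_sum (f := fun j => max 0 (-lam j (xc js)))
          (fun j _ => le_max_left _ _) (Finset.mem_univ js)
      have h3' := habs (xc js)
      have h4' : ∑ j, |lam j (xc js)| ≤ ∑ j, |lam j x₀| := hx₀max (hxcΩ js)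
      rw [← hnormP] at h4'
      linarith
    · linarith
  -- lower bound: sum of negative parts is at most m * Lp
  have hsumneg : ∀ x ∈ Ω, ∑ j, max 0 (-lam j x) ≤ (m:ℝ) * Lp := by
    intro x hx
    have hex : ∃ j₀, 0 < lam j₀ x := by
      by_contra hcon
      push_neg at hcon
      have : ∑ j, lam j x ≤ 0 := Finset.sum_nonpos fun j _ => hcon j
      rw [hsum1 x] at this
      linarith
    obtain ⟨j₀, hj₀⟩ := hex
    have hsplit : ∑ j, max 0 (-lam j x)
        = ∑ j ∈ Finset.univ.erase j₀, max 0 (-lam j x) := by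
      rw [← Finset.sum_erase_add _ _ (Finset.mem_univ j₀),
        max_eq_left (by linarith), add_zero]
    rw [hsplit]
    have hcard : (Finset.univ.erase j₀).card = m := by
      rw [Finset.card_erase_of_mem (Finset.mem_univ j₀)]
      simp
    calc ∑ j ∈ Finset.univ.erase j₀, max 0 (-lam j x)
        ≤ (Finset.univ.erase j₀).card • Lp := by
          apply Finset.sum_le_card_nsmul
          intro j _
          exact max_le hLp0 ((hL x hx j).trans (le_max_left _ _))
      _ = (m:ℝ) * Lp := by rw [hcard]; simp [nsmul_eq_mul]
  have hkey : normP - 1 ≤ 2 * (m:ℝ) * Lp := by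
    have := hsumneg x₀ hx₀Ω
    have h3' := habs x₀
    rw [← hnormP] at h3'
    linarith
  rw [habsCoef]
  have hnp0 : 0 ≤ normP - 1 := by linarith
  constructor
  · -- lower bound
    have hnn : (0:ℝ) ≤ (1/2) * (1 + 1/(m:ℝ)) := by positivity
    have hmul := mul_le_mul_of_nonneg_left hkey hnn
    have hmm : (m:ℝ) * ((1:ℝ)/(m:ℝ)) ≤ 1 := by
      rcases eq_or_ne (m:ℝ) 0 with h | h
      · simp [h]
      · rw [mul_one_div, div_self h]
    have hid : (1/2) * (1 + 1/(m:ℝ)) * (2 * (m:ℝ) * Lp)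
        = ((m:ℝ) + (m:ℝ) * ((1:ℝ)/(m:ℝ))) * Lp := by ring
    have h6 : ((m:ℝ) + (m:ℝ) * ((1:ℝ)/(m:ℝ))) * Lp ≤ ((m:ℝ)+1) * Lp := by
      apply mul_le_mul_of_nonneg_right _ hLp0
      linarith
    rw [hξ]
    rw [hid] at hmul
    linarith
  · -- upper bound
    have := mul_le_mul_of_nonneg_left hLup hm1.le
    rw [hξ]
    linarith
end

section
/- For quadratic interpolation on [−1,1] with symmetric nodes −r, 0, r where 0 < r ≤ 1, the norm of the interpolation projector P : C[−1,1] → Π_2(R^1) equals max(5/4, 2/r² − 1). -/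
/-- The Lagrange basis polynomial for node `j` of the node family `c`. -/
noncomputable def lag {k : ℕ} (c : Fin k → ℝ) (j : Fin k) (x : ℝ) : ℝ :=
  ∏ i ∈ Finset.univ.erase j, (x - c i) / (c j - c i)

/-- The norm of the interpolation projector with nodes `c`, i.e. the maximum over
`[-1,1]` of the Lebesgue function `x ↦ ∑ⱼ |λⱼ(x)|`. -/
noncomputable def projNorm {k : ℕ} (c : Fin k → ℝ) : ℝ :=
  sSup {s : ℝ | ∃ x ∈ Set.Icc (-1:ℝ) 1, s = ∑ j, |lag c j x|}

/-- The Lebesgue function of the symmetric quadratic projector. -/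
noncomputable def leb (r x : ℝ) : ℝ :=
  |x*(x-r)/(2*r^2)| + |(r^2 - x^2)/r^2| + |x*(x+r)/(2*r^2)|

lemma sum_abs_lag (r x : ℝ) :
    ∑ j : Fin 3, |lag ![-r,0,r] j x| = leb r x := by
  have h0 : (Finset.univ.erase (0:Fin 3)) = {1,2} := by decide
  have h1 : (Finset.univ.erase (1:Fin 3)) = {0,2} := by decide
  have h2 : (Finset.univ.erase (2:Fin 3)) = {0,1} := by decide
  simp [lag, leb, Fin.sum_univ_three, h0, h1, h2,
    Finset.prod_pair (by decide : (1:Fin 3) ≠ 2),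
    Finset.prod_pair (by decide : (0:Fin 3) ≠ 2),
    Finset.prod_pair (by decide : (0:Fin 3) ≠ 1)]
  ring_nf

lemma leb_neg (r x : ℝ) : leb r (-x) = leb r x := by
  unfold leb
  rw [show (-x)*(-x-r) = x*(x+r) by ring, show (-x)*(-x+r) = x*(x-r) by ring,
    show r^2 - (-x)^2 = r^2 - x^2 by ring]
  ring

lemma leb_le (r : ℝ) (hr0 : 0 < r) (hr1 : r ≤ 1) (x : ℝ) (hx : x ∈ Set.Icc (0:ℝ) 1) :
    leb r x ≤ max (5/4) (2/r^2 - 1) := by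
  obtain ⟨hx0, hx1⟩ := hx
  have hr2 : (0:ℝ) < r^2 := by positivity
  rcases le_total x r with h | h
  · -- 0 ≤ x ≤ r : bound by 5/4
    refine le_trans ?_ (le_max_left _ _)
    unfold leb
    rw [abs_of_nonpos (div_nonpos_of_nonpos_of_nonneg
        (mul_nonpos_of_nonneg_of_nonpos hx0 (by linarith)) (by positivity)),
      abs_of_nonneg (div_nonneg (by nlinarith) (by positivity)),
      abs_of_nonneg (div_nonneg (by nlinarith) (by positivity))]
    rw [show -(x*(x-r)/(2*r^2)) + (r^2-x^2)/r^2 + x*(x+r)/(2*r^2)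
        = (x*r + r^2 - x^2)/r^2 by field_simp; ring, div_le_iff₀ hr2]
    nlinarith [sq_nonneg (r - 2*x)]
  · -- r ≤ x ≤ 1 : bound by 2/r² - 1
    refine le_trans ?_ (le_max_right _ _)
    unfold leb
    rw [abs_of_nonneg (div_nonneg (by nlinarith) (by positivity)),
      abs_of_nonpos (div_nonpos_of_nonpos_of_nonneg (by nlinarith) (by positivity)),
      abs_of_nonneg (div_nonneg (by nlinarith) (by positivity))]
    rw [show x*(x-r)/(2*r^2) + -((r^2-x^2)/r^2) + x*(x+r)/(2*r^2)
        = (2*x^2 - r^2)/r^2 by field_simp; ring,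
      show (2/r^2 - 1 : ℝ) = (2 - r^2)/r^2 by field_simp]
    gcongr
    nlinarith

theorem quadratic_symmetric_projNorm (r : ℝ) (hr0 : 0 < r) (hr1 : r ≤ 1) :
    projNorm ![-r, 0, r] = max (5/4) (2/r^2 - 1) := by
  have hr2 : (0:ℝ) < r^2 := by positivity
  set M := max (5/4 : ℝ) (2/r^2 - 1) with hM
  have hub : ∀ s ∈ {s : ℝ | ∃ x ∈ Set.Icc (-1:ℝ) 1, s = ∑ j, |lag ![-r,0,r] j x|}, s ≤ M := by
    rintro s ⟨x, hx, rfl⟩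
    rw [sum_abs_lag]
    rcases le_total 0 x with h | h
    · exact leb_le r hr0 hr1 x ⟨h, hx.2⟩
    · rw [← leb_neg]
      exact leb_le r hr0 hr1 (-x) ⟨by linarith, by linarith [hx.1]⟩
  have hmem : M ∈ {s : ℝ | ∃ x ∈ Set.Icc (-1:ℝ) 1, s = ∑ j, |lag ![-r,0,r] j x|} := by
    rcases le_total (2/r^2 - 1) (5/4 : ℝ) with h | h
    · refine ⟨r/2, ⟨by linarith, by linarith⟩, ?_⟩
      rw [sum_abs_lag, hM, max_eq_left h]
      unfold leb
      rw [show (r/2)*(r/2-r)/(2*r^2) = -(1/8) by field_simp; ring,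
        show (r^2-(r/2)^2)/r^2 = 3/4 by field_simp; ring,
        show (r/2)*(r/2+r)/(2*r^2) = 3/8 by field_simp; ring]
      rw [abs_neg, abs_of_nonneg (by norm_num : (0:ℝ) ≤ 1/8),
        abs_of_nonneg (by norm_num : (0:ℝ) ≤ 3/4), abs_of_nonneg (by norm_num : (0:ℝ) ≤ 3/8)]
      norm_num
    · refine ⟨1, ⟨by norm_num, le_refl 1⟩, ?_⟩
      rw [sum_abs_lag, hM, max_eq_right h]
      unfold leb
      rw [abs_of_nonneg (div_nonneg (by nlinarith) (by positivity)),
        abs_of_nonpos (div_nonpos_of_nonpos_of_nonneg (by nlinarith) (by positivity)),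
        abs_of_nonneg (div_nonneg (by nlinarith) (by positivity))]
      field_simp
      ring
  exact IsGreatest.csSup_eq ⟨hmem, hub⟩
end

section
/- For quadratic interpolation on [−1,1] with symmetric nodes −r, 0, r (0 < r ≤ 1), letting S ⊂ R² be the triangle with vertices (−r, r²), (0,0), (r, r²) and T(x) = (x, x²), the absorption coefficient satisfies ξ(T([−1,1]); S) = max(11/8, 3/r² − 2). -/
set_option maxHeartbeats 1000000 in
theorem quadratic_symmetric_absCoef (r : ℝ) (hr0 : 0 < r) (hr1 : r ≤ 1) :
    absCoef ((fun x : ℝ => ![x, x^2]) '' Set.Icc (-1) 1)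
        ![![-r, r^2], ![0, 0], ![r, r^2]] =
      max (11/8) (3/r^2 - 2) := by
  have hr2 : (0:ℝ) < r^2 := by positivity
  set v : Fin 3 → (Fin 2 → ℝ) := ![![-r, r^2], ![0, 0], ![r, r^2]] with hv
  -- centroid of the triangle
  have hc : Finset.univ.centroid ℝ v = ![0, 2*r^2/3] := by
    rw [Finset.centroid_def,
      Finset.affineCombination_eq_linear_combination _ _ _
        (Finset.sum_centroidWeights_eq_one_of_nonempty ℝ _ Finset.univ_nonempty)]
    funext j
    simp only [Finset.centroidWeights_apply, Finset.card_univ, Fintype.card_fin,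
      Fin.sum_univ_three, Pi.add_apply, Pi.smul_apply, smul_eq_mul]
    fin_cases j <;> simp [hv] <;> ring
  -- the scaled simplex is the hull of the scaled vertices
  have key : ∀ σ : ℝ, scaledSimplex v σ =
      convexHull ℝ (Set.range
        (![![-(σ*r), (σ+2)*r^2/3], ![0, (2-2*σ)*r^2/3], ![σ*r, (σ+2)*r^2/3]]
          : Fin 3 → Fin 2 → ℝ)) := by
    intro σ
    rw [scaledSimplex, simplexHull, AffineMap.image_convexHull, ← Set.range_comp]
    have heq : (⇑(AffineMap.homothety (Finset.univ.centroid ℝ v) σ) ∘ v) =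
        (![![-(σ*r), (σ+2)*r^2/3], ![0, (2-2*σ)*r^2/3], ![σ*r, (σ+2)*r^2/3]]
          : Fin 3 → Fin 2 → ℝ) := by
      funext i j
      simp only [Function.comp_apply, AffineMap.homothety_apply, vsub_eq_sub,
        vadd_eq_add, hc, Pi.add_apply, Pi.smul_apply, Pi.sub_apply, smul_eq_mul]
      fin_cases i <;> fin_cases j <;> simp [hv] <;> ring
    rw [heq]
  set A : ℝ → Fin 3 → Fin 2 → ℝ := fun σ =>
    ![![-(σ*r), (σ+2)*r^2/3], ![0, (2-2*σ)*r^2/3], ![σ*r, (σ+2)*r^2/3]] with hA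
  have keyA : ∀ σ : ℝ, scaledSimplex v σ = convexHull ℝ (Set.range (A σ)) := key
  set M := max (11/8 : ℝ) (3/r^2 - 2) with hM
  have hM1 : (11/8 : ℝ) ≤ M := le_max_left _ _
  have hM2 : 3/r^2 - 2 ≤ M := le_max_right _ _
  have hsetEq : {σ : ℝ | 1 ≤ σ ∧
      ((fun x : ℝ => ![x, x^2]) '' Set.Icc (-1) 1) ⊆ scaledSimplex v σ} = Set.Ici M := by
    ext σ
    simp only [Set.mem_setOf_eq, Set.mem_Ici]
    constructor
    · rintro ⟨hσ1, hsub⟩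
      rw [keyA σ] at hsub
      -- lower-edge constraint at x = r/2 gives σ ≥ 11/8
      have hp1 : ![r/2, (r/2)^2] ∈ convexHull ℝ (Set.range (A σ)) := by
        apply hsub
        exact ⟨r/2, ⟨by constructor <;> nlinarith, rfl⟩⟩
      have hlin1 : IsLinearMap ℝ (fun p : Fin 2 → ℝ => p 1 - r * p 0) := by
        constructor
        · intro a b; simp; ring
        · intro c a; simp; ring
      have hcvx1 : Convex ℝ {p : Fin 2 → ℝ | (2-2*σ)*r^2/3 ≤ p 1 - r * p 0} :=
        convex_halfSpace_ge hlin1 _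
      have hsub1 : Set.range (A σ) ⊆ {p : Fin 2 → ℝ | (2-2*σ)*r^2/3 ≤ p 1 - r * p 0} := by
        rintro _ ⟨i, rfl⟩
        fin_cases i <;> simp [hA] <;> nlinarith
      have h1 := convexHull_min hsub1 hcvx1 hp1
      simp only [Set.mem_setOf_eq, Matrix.cons_val_one, Matrix.head_cons,
        Matrix.cons_val_zero] at h1
      have hσ8 : (11/8 : ℝ) ≤ σ := by nlinarith
      -- top-edge constraint at x = 1 gives σ ≥ 3/r² − 2
      have hp2 : ![(1:ℝ), 1^2] ∈ convexHull ℝ (Set.range (A σ)) := by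
        apply hsub
        exact ⟨1, ⟨by constructor <;> norm_num, rfl⟩⟩
      have hlin2 : IsLinearMap ℝ (fun p : Fin 2 → ℝ => p 1) := by
        constructor
        · intro a b; simp
        · intro c a; simp
      have hcvx2 : Convex ℝ {p : Fin 2 → ℝ | p 1 ≤ (σ+2)*r^2/3} :=
        convex_halfSpace_le hlin2 _
      have hsub2 : Set.range (A σ) ⊆ {p : Fin 2 → ℝ | p 1 ≤ (σ+2)*r^2/3} := by
        rintro _ ⟨i, rfl⟩
        fin_cases i <;> simp [hA] <;> nlinarith
      have h2 := convexHull_min hsub2 hcvx2 hp2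
      simp only [Set.mem_setOf_eq, Matrix.cons_val_one, Matrix.head_cons, Matrix.cons_val_zero] at h2
      have h3 : (3:ℝ) ≤ (σ+2)*r^2 := by nlinarith
      have hσ3 : 3/r^2 - 2 ≤ σ := by
        have : 3/r^2 ≤ σ + 2 := (div_le_iff₀ hr2).mpr (by linarith)
        linarith
      exact max_le hσ8 hσ3
    · intro hσ
      have hσ8 : (11/8 : ℝ) ≤ σ := le_trans hM1 hσ
      have hσ0 : (0:ℝ) < σ := by linarith
      refine ⟨by linarith, ?_⟩
      rw [keyA σ]
      rintro _ ⟨x, hx, rfl⟩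
      obtain ⟨hx1, hx2⟩ := hx
      have h3 : (3:ℝ) ≤ (σ+2)*r^2 := by
        have h' : 3/r^2 ≤ σ + 2 := by linarith [le_trans hM2 hσ]
        calc (3:ℝ) = 3/r^2 * r^2 := by field_simp
        _ ≤ (σ+2)*r^2 := by nlinarith
      have habs2 : x^2 ≤ 1 := by nlinarith
      set s : ℝ := (x^2 - (2-2*σ)*r^2/3)/(σ*r^2) with hs
      set w : Fin 3 → ℝ := ![(s - x/(σ*r))/2, 1 - s, (s + x/(σ*r))/2] with hw
      have hσr2 : (0:ℝ) < σ * r^2 := by positivity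
      have hnum1 : 0 ≤ x^2 - (2-2*σ)*r^2/3 - r*x := by
        nlinarith [sq_nonneg (x - r/2), mul_nonneg hr2.le (by linarith : (0:ℝ) ≤ σ - 11/8)]
      have hnum2 : 0 ≤ x^2 - (2-2*σ)*r^2/3 + r*x := by
        nlinarith [sq_nonneg (x + r/2), mul_nonneg hr2.le (by linarith : (0:ℝ) ≤ σ - 11/8)]
      have hs1 : s ≤ 1 := by
        rw [hs, div_le_one hσr2]
        nlinarith
      have hw0 : ∀ i, 0 ≤ w i := by
        intro i
        fin_cases i
        · show 0 ≤ (s - x/(σ*r))/2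
          have he : s - x/(σ*r) = (x^2 - (2-2*σ)*r^2/3 - r*x)/(σ*r^2) := by
            rw [hs]; field_simp
          rw [he]
          exact div_nonneg (div_nonneg hnum1 hσr2.le) (by norm_num)
        · show 0 ≤ 1 - s
          linarith
        · show 0 ≤ (s + x/(σ*r))/2
          have he : s + x/(σ*r) = (x^2 - (2-2*σ)*r^2/3 + r*x)/(σ*r^2) := by
            rw [hs]; field_simp
          rw [he]
          exact div_nonneg (div_nonneg hnum2 hσr2.le) (by norm_num)
      have hsum : ∑ i, w i = 1 := by
        simp [hw, Fin.sum_univ_three]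
        ring
      have hcm : Finset.univ.centerMass w (A σ) = ![x, x^2] := by
        rw [Finset.centerMass_eq_of_sum_1 _ _ hsum]
        funext j
        fin_cases j <;>
          · simp [hw, hA, hs, Fin.sum_univ_three]
            field_simp
            ring
      have hmem := Finset.centerMass_mem_convexHull (Finset.univ)
        (fun i _ => hw0 i) (by rw [hsum]; norm_num)
        (fun i _ => Set.mem_range_self (f := A σ) i)
      rw [hcm] at hmem
      exact hmem
  have : absCoef ((fun x : ℝ => ![x, x^2]) '' Set.Icc (-1) 1) v = sInf (Set.Ici M) := by
    rw [absCoef, hsetEq]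
  rw [this, csInf_Ici]
end

section
/- Let T(x) = (x, x²) and G = T([−1,1]) = {(x,x²) : −1 ≤ x ≤ 1} ⊂ R². The minimal absorption coefficient ξ_2(G) := min{ξ(G; S) : S a nondegenerate triangle with vertices in G} equals 11/8. -/
namespace Parab

def Pt (t : ℝ) : Fin 2 → ℝ := ![t, t^2]

def G : Set (Fin 2 → ℝ) := (fun x : ℝ => ![x, x^2]) '' Set.Icc (-1) 1

lemma centroid_fin3 (v : Fin 3 → (Fin 2 → ℝ)) :
    Finset.univ.centroid ℝ v = (3:ℝ)⁻¹ • (∑ i, v i) := by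
  rw [Finset.centroid_def,
    Finset.affineCombination_eq_linear_combination _ _ _ (by simp [Finset.centroidWeights])]
  simp [Finset.centroidWeights, Finset.smul_sum]

lemma scaledSimplex_perm (v : Fin 3 → (Fin 2 → ℝ)) (e : Equiv.Perm (Fin 3)) (σ : ℝ) :
    scaledSimplex (v ∘ e) σ = scaledSimplex v σ := by
  have hr : Set.range (v ∘ e) = Set.range v := e.surjective.range_comp v
  have hc : Finset.univ.centroid ℝ (v ∘ e) = Finset.univ.centroid ℝ v := by
    rw [centroid_fin3, centroid_fin3]; exact congrArg _ (Equiv.sum_comp e v)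
  rw [scaledSimplex, scaledSimplex, simplexHull, simplexHull, hr, hc]

def cyc : Equiv.Perm (Fin 3) :=
  ⟨![1, 2, 0], ![2, 0, 1], by decide, by decide⟩

lemma subset_scaled (a b c σ : ℝ) (hab : a < b) (hbc : b < c) (hσ : 1 ≤ σ)
    (hA : ∀ x ∈ Set.Icc (-1:ℝ) 1, (1 - σ)/3 ≤ (b-x)*(c-x)/((b-a)*(c-a)))
    (hB : ∀ x ∈ Set.Icc (-1:ℝ) 1, (1 - σ)/3 ≤ (x-a)*(c-x)/((b-a)*(c-b)))
    (hC : ∀ x ∈ Set.Icc (-1:ℝ) 1, (1 - σ)/3 ≤ (x-a)*(x-b)/((c-a)*(c-b))) :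
    G ⊆ scaledSimplex ![Pt a, Pt b, Pt c] σ := by
  rintro p ⟨x, hx, rfl⟩
  have hσ0 : (0:ℝ) < σ := lt_of_lt_of_le one_pos hσ
  have d1 : b - a ≠ 0 := by linarith
  have d2 : c - b ≠ 0 := by linarith
  have d3 : c - a ≠ 0 := by linarith
  have hla := hA x hx
  have hlb := hB x hx
  have hlc := hC x hx
  set la := (b-x)*(c-x)/((b-a)*(c-a)) with hla_def
  set lb := (x-a)*(c-x)/((b-a)*(c-b)) with hlb_def
  set lc := (x-a)*(x-b)/((c-a)*(c-b)) with hlc_def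
  have hsum : la + lb + lc = 1 := by rw [hla_def, hlb_def, hlc_def]; field_simp; ring
  have hx0 : la*a + lb*b + lc*c = x := by rw [hla_def, hlb_def, hlc_def]; field_simp; ring
  have hx1 : la*a^2 + lb*b^2 + lc*c^2 = x^2 := by
    rw [hla_def, hlb_def, hlc_def]; field_simp; ring
  clear_value la lb lc
  set μa := (σ - 1 + 3*la)/(3*σ) with hμa_def
  set μb := (σ - 1 + 3*lb)/(3*σ) with hμb_def
  set μc := (σ - 1 + 3*lc)/(3*σ) with hμc_def
  have hμsum : μa + μb + μc = 1 := by
    rw [hμa_def, hμb_def, hμc_def]; field_simp; linarith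
  have hμa0 : 0 ≤ μa := div_nonneg (by linarith) (by linarith)
  have hμb0 : 0 ≤ μb := div_nonneg (by linarith) (by linarith)
  have hμc0 : 0 ≤ μc := div_nonneg (by linarith) (by linarith)
  have key : ∀ ta tb tc tx : ℝ, la*ta + lb*tb + lc*tc = tx →
      σ*((μa*ta+μb*tb+μc*tc) - (ta+tb+tc)/3) + (ta+tb+tc)/3 = tx := by
    intro ta tb tc tx h
    rw [hμa_def, hμb_def, hμc_def]
    field_simp
    linear_combination 3*h
  clear_value μa μb μc
  refine ⟨μa • Pt a + μb • Pt b + μc • Pt c, ?_, ?_⟩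
  · have hcm : (Finset.univ : Finset (Fin 3)).centerMass ![μa, μb, μc] ![Pt a, Pt b, Pt c]
        = μa • Pt a + μb • Pt b + μc • Pt c := by
      rw [Finset.centerMass]
      simp [Fin.sum_univ_three]
      rw [show μa + μb + μc = 1 from hμsum]
      simp
    rw [simplexHull, ← hcm]
    refine Finset.centerMass_mem_convexHull _ ?_ ?_ ?_
    · intro i _; fin_cases i <;> simpa
    · simp [Fin.sum_univ_three]; linarith
    · intro i _; fin_cases i <;> exact Set.mem_range_self _
  · rw [AffineMap.homothety_apply, centroid_fin3]
    funext i
    fin_cases i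
    · simp [Pt, Fin.sum_univ_three]
      linarith [key a b c x hx0]
    · simp [Pt, Fin.sum_univ_three]
      linarith [key (a^2) (b^2) (c^2) (x^2) hx1]

lemma key_constraint (p q r σ : ℝ) (hσ : 1 ≤ σ)
    (hm : (p+q)/2 ∈ Set.Icc (-1:ℝ) 1) (hD : 0 < (r-p)*(r-q))
    (h : G ⊆ scaledSimplex ![Pt p, Pt q, Pt r] σ) :
    (q-p)^2/4 ≤ (σ-1)*((r-p)*(r-q))/3 := by
  have hσ0 : (0:ℝ) < σ := lt_of_lt_of_le one_pos hσ
  have hmem : Pt ((p+q)/2) ∈ scaledSimplex ![Pt p, Pt q, Pt r] σ := h ⟨(p+q)/2, hm, rfl⟩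
  obtain ⟨z, hz, hzeq⟩ := hmem
  set f : (Fin 2 → ℝ) → ℝ := fun y => (p+q) * y 0 - y 1 with hf
  have hlin : IsLinearMap ℝ f := by
    constructor
    · intro u v; simp [hf]; ring
    · intro s u; simp [hf]; ring
  have hhull : simplexHull ![Pt p, Pt q, Pt r] ⊆ {y | f y ≤ p*q} := by
    apply convexHull_min _ (convex_halfSpace_le hlin _)
    rintro y ⟨i, rfl⟩
    fin_cases i <;> simp [hf, Pt] <;> nlinarith [hD]
  have hfz : f z ≤ p*q := hhull hz
  have hcen : f (Finset.univ.centroid ℝ ![Pt p, Pt q, Pt r]) = p*q - (r-p)*(r-q)/3 := by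
    rw [centroid_fin3]; simp [hf, Pt, Fin.sum_univ_three]; ring
  have him : f (Pt ((p+q)/2))
      = σ * f z + (1-σ) * f (Finset.univ.centroid ℝ ![Pt p, Pt q, Pt r]) := by
    rw [← hzeq, AffineMap.homothety_apply]
    simp [hf]
    ring
  have hPm : f (Pt ((p+q)/2)) = (p+q)^2/4 := by simp [hf, Pt]; ring
  rw [hPm, hcen] at him
  set F := f z with hF
  clear_value F
  have hint : σ * F ≤ σ * (p*q) := mul_le_mul_of_nonneg_left hfz (le_of_lt hσ0)
  nlinarith [him, hint]

lemma lower_bound_sorted (a b c σ : ℝ) (hab : a < b) (hbc : b < c)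
    (ha : -1 ≤ a) (hc : c ≤ 1) (hσ : 1 ≤ σ)
    (h : G ⊆ scaledSimplex ![Pt a, Pt b, Pt c] σ) : 11/8 ≤ σ := by
  have hb1 : b ≤ 1 := le_trans hbc.le hc
  have hbm : -1 ≤ b := le_trans ha hab.le
  have C1 : (b-a)^2/4 ≤ (σ-1)*((c-a)*(c-b))/3 :=
    key_constraint a b c σ hσ ⟨by linarith, by linarith⟩ (by nlinarith) h
  have h2 : G ⊆ scaledSimplex ![Pt b, Pt c, Pt a] σ := by
    rwa [show ![Pt b, Pt c, Pt a] = ![Pt a, Pt b, Pt c] ∘ cyc from by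
        funext j; fin_cases j <;> rfl,
      scaledSimplex_perm]
  have C2 : (c-b)^2/4 ≤ (σ-1)*((a-b)*(a-c))/3 :=
    key_constraint b c a σ hσ ⟨by linarith, by linarith⟩ (by nlinarith) h2
  by_contra hcon
  push_neg at hcon
  nlinarith [C1, C2, sq_nonneg (c-a), sq_nonneg (a+c-2*b),
    mul_pos (sub_pos.2 hab) (sub_pos.2 hbc)]

lemma nonempty_absorb (a b c : ℝ) (hab : a < b) (hbc : b < c)
    (ha : -1 ≤ a) (hc : c ≤ 1) :
    ∃ σ : ℝ, 1 ≤ σ ∧ G ⊆ scaledSimplex ![Pt a, Pt b, Pt c] σ := by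
  have hb1 : b ≤ 1 := le_trans hbc.le hc
  have hbm : -1 ≤ b := le_trans ha hab.le
  have hc1 : -1 ≤ c := le_trans hbm hbc.le
  have ha1 : a ≤ 1 := le_trans hab.le hb1
  have d1 : (0:ℝ) < (b-a)*(c-a) := by nlinarith
  have d2 : (0:ℝ) < (b-a)*(c-b) := by nlinarith
  have d3 : (0:ℝ) < (c-a)*(c-b) := by nlinarith
  set σ₀ : ℝ := 1 + 12/((b-a)*(c-a)) + 12/((b-a)*(c-b)) + 12/((c-a)*(c-b)) with hσ₀
  have p1 : (0:ℝ) < 12/((b-a)*(c-a)) := by positivity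
  have p2 : (0:ℝ) < 12/((b-a)*(c-b)) := by positivity
  have p3 : (0:ℝ) < 12/((c-a)*(c-b)) := by positivity
  have hσ1 : (1:ℝ) ≤ σ₀ := by rw [hσ₀]; linarith
  have hkey : ∀ d : ℝ, 0 < d → 12/((b-a)*(c-a)) + 12/((b-a)*(c-b)) + 12/((c-a)*(c-b)) ≥ 12/d →
      (1 - σ₀)/3 ≤ (-4)/d := by
    intro d hd hge
    rw [hσ₀]
    have : (1 - (1 + 12/((b-a)*(c-a)) + 12/((b-a)*(c-b)) + 12/((c-a)*(c-b))))/3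
        = -(12/((b-a)*(c-a)) + 12/((b-a)*(c-b)) + 12/((c-a)*(c-b)))/3 := by ring
    rw [this]
    have h4 : (-4)/d = -(12/d)/3 := by ring
    rw [h4]
    linarith
  refine ⟨σ₀, hσ1, subset_scaled a b c σ₀ hab hbc hσ1 ?_ ?_ ?_⟩
  · intro x hx
    obtain ⟨hx1, hx2⟩ := hx
    have hnum : (-4:ℝ) ≤ (b-x)*(c-x) := by nlinarith
    have h1 : (-4)/((b-a)*(c-a)) ≤ (b-x)*(c-x)/((b-a)*(c-a)) := by gcongr
    refine le_trans (hkey _ d1 ?_) h1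
    linarith
  · intro x hx
    obtain ⟨hx1, hx2⟩ := hx
    have hnum : (-4:ℝ) ≤ (x-a)*(c-x) := by nlinarith
    have h1 : (-4)/((b-a)*(c-b)) ≤ (x-a)*(c-x)/((b-a)*(c-b)) := by gcongr
    refine le_trans (hkey _ d2 ?_) h1
    linarith
  · intro x hx
    obtain ⟨hx1, hx2⟩ := hx
    have hnum : (-4:ℝ) ≤ (x-a)*(x-b) := by nlinarith
    have h1 : (-4)/((c-a)*(c-b)) ≤ (x-a)*(x-b)/((c-a)*(c-b)) := by gcongr
    refine le_trans (hkey _ d3 ?_) h1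
    linarith

lemma subset_spec : G ⊆ scaledSimplex ![Pt (-1), Pt 0, Pt 1] (11/8) := by
  refine subset_scaled (-1) 0 1 (11/8) (by norm_num) (by norm_num) (by norm_num) ?_ ?_ ?_
  · intro x hx
    obtain ⟨hx1, hx2⟩ := hx
    have h2 : ((0:ℝ)-(-1))*(1-(-1)) = 2 := by norm_num
    rw [h2]
    nlinarith [sq_nonneg (2*x-1)]
  · intro x hx
    obtain ⟨hx1, hx2⟩ := hx
    have h2 : ((0:ℝ)-(-1))*(1-0) = 1 := by norm_num
    rw [h2]
    nlinarith
  · intro x hx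
    obtain ⟨hx1, hx2⟩ := hx
    have h2 : ((1:ℝ)-(-1))*(1-0) = 2 := by norm_num
    rw [h2]
    nlinarith [sq_nonneg (2*x+1)]

lemma affineIndep_spec : AffineIndependent ℝ ![Pt (-1), Pt 0, Pt 1] := by
  rw [affineIndependent_iff_of_fintype]
  intro w hw h0
  rw [Finset.weightedVSub_eq_linear_combination _ hw] at h0
  simp [Fin.sum_univ_three, Pt] at h0
  obtain ⟨h1, h2⟩ := h0
  rw [Fin.sum_univ_three] at hw
  intro i; fin_cases i <;> simp <;> linarith

lemma absCoef_spec : absCoef G ![Pt (-1), Pt 0, Pt 1] = 11/8 := by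
  have hmem : (11/8 : ℝ) ∈ {σ : ℝ | 1 ≤ σ ∧ G ⊆ scaledSimplex ![Pt (-1), Pt 0, Pt 1] σ} :=
    ⟨by norm_num, subset_spec⟩
  have hlb : ∀ σ ∈ {σ : ℝ | 1 ≤ σ ∧ G ⊆ scaledSimplex ![Pt (-1), Pt 0, Pt 1] σ},
      (11/8 : ℝ) ≤ σ := by
    rintro σ ⟨h1, h2⟩
    exact lower_bound_sorted (-1) 0 1 σ (by norm_num) (by norm_num) (by norm_num)
      (by norm_num) h1 h2
  rw [absCoef]
  exact le_antisymm (csInf_le ⟨11/8, hlb⟩ hmem) (le_csInf ⟨_, hmem⟩ hlb)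

end Parab

open Parab

theorem minimal_absCoef_parabola :
    sInf {t : ℝ | ∃ v : Fin 3 → (Fin 2 → ℝ),
        (∀ j, v j ∈ (fun x : ℝ => ![x, x^2]) '' Set.Icc (-1) 1) ∧ AffineIndependent ℝ v ∧
        t = absCoef ((fun x : ℝ => ![x, x^2]) '' Set.Icc (-1) 1) v} = 11/8 := by
  have hmem : (11/8 : ℝ) ∈ {t : ℝ | ∃ v : Fin 3 → (Fin 2 → ℝ),
      (∀ j, v j ∈ (fun x : ℝ => ![x, x^2]) '' Set.Icc (-1) 1) ∧ AffineIndependent ℝ v ∧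
      t = absCoef ((fun x : ℝ => ![x, x^2]) '' Set.Icc (-1) 1) v} := by
    refine ⟨![Pt (-1), Pt 0, Pt 1], ?_, affineIndep_spec, ?_⟩
    · intro j
      fin_cases j
      · exact ⟨-1, by norm_num, rfl⟩
      · exact ⟨0, by norm_num, rfl⟩
      · exact ⟨1, by norm_num, rfl⟩
    · exact absCoef_spec.symm
  have hlb : ∀ t ∈ {t : ℝ | ∃ v : Fin 3 → (Fin 2 → ℝ),
      (∀ j, v j ∈ (fun x : ℝ => ![x, x^2]) '' Set.Icc (-1) 1) ∧ AffineIndependent ℝ v ∧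
      t = absCoef ((fun x : ℝ => ![x, x^2]) '' Set.Icc (-1) 1) v}, (11/8 : ℝ) ≤ t := by
    rintro t ⟨v, hv, hind, rfl⟩
    choose τ hτ1 hτ2 using hv
    have hinj : Function.Injective τ := by
      intro i j hij
      exact hind.injective (by rw [← hτ2 i, ← hτ2 j, hij])
    set e := Tuple.sort τ with he
    have smono : StrictMono (τ ∘ e) :=
      (Tuple.monotone_sort τ).strictMono_of_injective (hinj.comp e.injective)
    set a := τ (e 0) with hadef
    set b := τ (e 1) with hbdef
    set c := τ (e 2) with hcdef
    have hab : a < b := smono (show (0:Fin 3) < 1 by decide)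
    have hbc : b < c := smono (show (1:Fin 3) < 2 by decide)
    have ha : -1 ≤ a := (hτ1 (e 0)).1
    have hc : c ≤ 1 := (hτ1 (e 2)).2
    have hcomp : v ∘ e = ![Pt a, Pt b, Pt c] := by
      funext j
      fin_cases j
      · show v (e 0) = _; rw [← hτ2 (e 0)]; rfl
      · show v (e 1) = _; rw [← hτ2 (e 1)]; rfl
      · show v (e 2) = _; rw [← hτ2 (e 2)]; rfl
    have hset : ∀ σ : ℝ, scaledSimplex v σ = scaledSimplex ![Pt a, Pt b, Pt c] σ := by
      intro σ
      rw [← scaledSimplex_perm v e σ, hcomp]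
    rw [absCoef]
    obtain ⟨σ₀, hσ₀1, hσ₀2⟩ := nonempty_absorb a b c hab hbc ha hc
    refine le_csInf ⟨σ₀, hσ₀1, ?_⟩ ?_
    · rw [hset]; exact hσ₀2
    · rintro σ ⟨h1, h2⟩
      rw [hset] at h2
      exact lower_bound_sorted a b c σ hab hbc ha hc h1 h2
  exact le_antisymm (csInf_le ⟨11/8, hlb⟩ hmem) (le_csInf ⟨_, hmem⟩ hlb)
end

section
/- For quadratic interpolation on [−1,1] at the three Chebyshev nodes −√3/2, 0, √3/2 (the zeros of 4x³ − 3x), the norm of the interpolation projector P : C[−1,1] → Π_2(R^1) equals 5/3. -/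
lemma cheb_sum (x : ℝ) :
    ∑ j, |lag ![-(Real.sqrt 3)/2, 0, (Real.sqrt 3)/2] j x| =
      |(2*x^2 - Real.sqrt 3 * x)/3| + |1 - 4*x^2/3| + |(2*x^2 + Real.sqrt 3 * x)/3| := by
  set s := Real.sqrt 3 with hsdef
  have hs : s^2 = 3 := Real.sq_sqrt (by norm_num)
  have h0 : (Finset.univ.erase (0:Fin 3)) = {1,2} := by decide
  have h1 : (Finset.univ.erase (1:Fin 3)) = {0,2} := by decide
  have h2 : (Finset.univ.erase (2:Fin 3)) = {0,1} := by decide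
  have e01 : ((1:Fin 3)) ∉ ({2} : Finset (Fin 3)) := by decide
  have e02 : ((0:Fin 3)) ∉ ({2} : Finset (Fin 3)) := by decide
  have e03 : ((0:Fin 3)) ∉ ({1} : Finset (Fin 3)) := by decide
  rw [Fin.sum_univ_three]
  unfold lag
  rw [h0, h1, h2, Finset.prod_insert e01, Finset.prod_insert e02, Finset.prod_insert e03,
    Finset.prod_singleton, Finset.prod_singleton, Finset.prod_singleton]
  simp only [Matrix.cons_val_zero, Matrix.cons_val_one, Matrix.head_cons, Matrix.cons_val_two,
    Matrix.tail_cons]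
  have t1 : (x - 0) / (-s/2 - 0) * ((x - s/2)/(-s/2 - s/2)) = (2*x^2 - s * x)/3 := by
    rw [div_mul_div_comm, div_eq_div_iff (by nlinarith) (by norm_num)]
    ring_nf
    linear_combination (-x^2 + 1/2*x*s)*hs
  have t2 : (x - -s/2) / (0 - -s/2) * ((x - s/2)/(0 - s/2)) = 1 - 4*x^2/3 := by
    have hB : (0 - -s/2)*(0 - s/2) = -(3/4) := by linear_combination -(1/4)*hs
    rw [div_mul_div_comm, hB, div_eq_iff (by norm_num)]
    linear_combination -(1/4)*hs
  have t3 : (x - -s/2) / (s/2 - -s/2) * ((x - 0)/(s/2 - 0)) = (2*x^2 + s * x)/3 := by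
    rw [div_mul_div_comm, div_eq_div_iff (by nlinarith) (by norm_num)]
    ring_nf
    linear_combination (-x^2 - 1/2*x*s)*hs
  rw [show -s/2 = -s/2 from rfl] at t1
  rw [t1, t2, t3]

set_option maxHeartbeats 1000000 in
theorem quadratic_chebyshev_projNorm :
    projNorm ![-(Real.sqrt 3)/2, 0, (Real.sqrt 3)/2] = 5/3 := by
  set s := Real.sqrt 3 with hsdef
  have hs : s^2 = 3 := Real.sq_sqrt (by norm_num)
  have hs0 : 0 ≤ s := Real.sqrt_nonneg 3
  have hs2 : s ≤ 2 := by nlinarith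
  have hs1 : 1 ≤ s := by nlinarith
  have hmem : (5/3 : ℝ) ∈ {t : ℝ | ∃ x ∈ Set.Icc (-1:ℝ) 1, t = ∑ j, |lag ![-(s)/2, 0, s/2] j x|} := by
    refine ⟨1, by norm_num, ?_⟩
    rw [cheb_sum]
    rw [abs_of_nonneg (by nlinarith), abs_of_nonpos (by norm_num), abs_of_nonneg (by nlinarith)]
    ring
  have hub : ∀ t ∈ {t : ℝ | ∃ x ∈ Set.Icc (-1:ℝ) 1, t = ∑ j, |lag ![-(s)/2, 0, s/2] j x|}, t ≤ 5/3 := by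
    rintro t ⟨x, ⟨hx1, hx2⟩, rfl⟩
    rw [cheb_sum]
    rcases abs_cases ((2*x^2 - s * x)/3) with ⟨ha, ha'⟩ | ⟨ha, ha'⟩ <;>
    rcases abs_cases (1 - 4*x^2/3) with ⟨hb, hb'⟩ | ⟨hb, hb'⟩ <;>
    rcases abs_cases ((2*x^2 + s * x)/3) with ⟨hc, hc'⟩ | ⟨hc, hc'⟩ <;>
    rw [ha, hb, hc] <;>
    nlinarith [hs, sq_nonneg (2*x - s), sq_nonneg (2*x + s), sq_nonneg x,
      mul_nonneg (sub_nonneg.2 hx2) (by linarith : (0:ℝ) ≤ x + 1)]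
  unfold projNorm
  exact le_antisymm (csSup_le ⟨5/3, hmem⟩ hub) (le_csSup ⟨5/3, hub⟩ hmem)
end

section
/- For the minimal quadratic interpolation projector on [−1,1] (with θ(Π_2;[−1,1]) = 5/4) and the minimal absorption coefficient ξ_2(T([−1,1])) = 11/8 where T(x) = (x,x²), the right-hand inequality ξ_2(T(Ω)) ≤ (d/2)(θ(Π;Ω) − 1) + 1 with d = 3 holds with equality: 11/8 = (3/2)(5/4 − 1) + 1. -/
/-! ### Auxiliary lemmas: the Lebesgue function for three nodes -/

lemma lag_zero (a b c x : ℝ) : lag ![a,b,c] 0 x = ((x-b)/(a-b)) * ((x-c)/(a-c)) := by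
  rw [lag, show (Finset.univ.erase (0 : Fin 3)) = {1, 2} from by decide,
    Finset.prod_insert (by decide), Finset.prod_singleton]
  simp

lemma lag_one (a b c x : ℝ) : lag ![a,b,c] 1 x = ((x-a)/(b-a)) * ((x-c)/(b-c)) := by
  rw [lag, show (Finset.univ.erase (1 : Fin 3)) = {0, 2} from by decide,
    Finset.prod_insert (by decide), Finset.prod_singleton]
  simp

lemma lag_two (a b c x : ℝ) : lag ![a,b,c] 2 x = ((x-a)/(c-a)) * ((x-b)/(c-b)) := by
  rw [lag, show (Finset.univ.erase (2 : Fin 3)) = {0, 1} from by decide,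
    Finset.prod_insert (by decide), Finset.prod_singleton]
  simp

lemma lag_cont {k : ℕ} (c : Fin k → ℝ) : Continuous fun x => ∑ j, |lag c j x| := by
  refine continuous_finset_sum _ (fun j _ => Continuous.abs ?_)
  unfold lag
  exact continuous_finset_prod _ (fun i _ => (continuous_id.sub continuous_const).div_const _)

lemma leb_set_eq {k : ℕ} (c : Fin k → ℝ) :
    {s : ℝ | ∃ x ∈ Set.Icc (-1:ℝ) 1, s = ∑ j, |lag c j x|} =
      (fun x => ∑ j, |lag c j x|) '' Set.Icc (-1:ℝ) 1 := by
  ext y; simp [Set.mem_image, eq_comm]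

lemma leb_bdd {k : ℕ} (c : Fin k → ℝ) :
    BddAbove {s : ℝ | ∃ x ∈ Set.Icc (-1:ℝ) 1, s = ∑ j, |lag c j x|} := by
  rw [leb_set_eq]
  exact (isCompact_Icc.image (lag_cont c)).bddAbove

lemma projNorm_opt : projNorm ![(-1:ℝ), 0, 1] = 5/4 := by
  refine IsGreatest.csSup_eq ⟨⟨1/2, by norm_num, ?_⟩, ?_⟩
  · rw [Fin.sum_univ_three, lag_zero, lag_one, lag_two]
    norm_num
  · rintro s ⟨x, hx, rfl⟩
    obtain ⟨hx1, hx2⟩ := hx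
    rw [Fin.sum_univ_three, lag_zero, lag_one, lag_two]
    have e0 : ((x-0)/((-1)-0)) * ((x-1)/((-1)-1)) = x*(x-1)/2 := by ring
    have e1 : ((x-(-1))/(0-(-1))) * ((x-1)/(0-1)) = 1 - x^2 := by ring
    have e2 : ((x-(-1))/(1-(-1))) * ((x-0)/(1-0)) = x*(x+1)/2 := by ring
    rw [e0, e1, e2, abs_of_nonneg (by nlinarith : (0:ℝ) ≤ 1 - x^2)]
    rcases le_or_gt 0 x with h | h
    · rw [abs_of_nonpos (by nlinarith), abs_of_nonneg (by nlinarith)]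
      nlinarith [sq_nonneg (x - 1/2)]
    · rw [abs_of_nonneg (by nlinarith), abs_of_nonpos (by nlinarith)]
      nlinarith [sq_nonneg (x + 1/2)]

lemma lag_sum (a b c x : ℝ) (hab : a ≠ b) (hac : a ≠ c) (hbc : b ≠ c) :
    lag ![a,b,c] 0 x + lag ![a,b,c] 1 x + lag ![a,b,c] 2 x = 1 := by
  have h1 : a - b ≠ 0 := sub_ne_zero.mpr hab
  have h2 : a - c ≠ 0 := sub_ne_zero.mpr hac
  have h3 : b - a ≠ 0 := sub_ne_zero.mpr hab.symm
  have h4 : b - c ≠ 0 := sub_ne_zero.mpr hbc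
  have h5 : c - a ≠ 0 := sub_ne_zero.mpr hac.symm
  have h6 : c - b ≠ 0 := sub_ne_zero.mpr hbc.symm
  rw [lag_zero, lag_one, lag_two]
  field_simp
  ring

lemma projNorm_ge (a b c : ℝ) (ha : -1 ≤ a) (hc : c ≤ 1) (hab : a < b) (hbc : b < c) :
    5/4 ≤ projNorm ![a,b,c] := by
  have hab' : a ≠ b := ne_of_lt hab
  have hac' : a ≠ c := ne_of_lt (hab.trans hbc)
  have hbc' : b ≠ c := ne_of_lt hbc
  have hu : 0 < b - a := sub_pos.mpr hab
  have hv : 0 < c - b := sub_pos.mpr hbc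
  have hw : 0 < c - a := sub_pos.mpr (hab.trans hbc)
  set L : ℝ → ℝ := fun x => ∑ j, |lag ![a,b,c] j x| with hL
  have hbdd := leb_bdd ![a,b,c]
  have m1 : (a+b)/2 ∈ Set.Icc (-1:ℝ) 1 := ⟨by linarith, by linarith⟩
  have m2 : (b+c)/2 ∈ Set.Icc (-1:ℝ) 1 := ⟨by linarith, by linarith⟩
  have le1 : L ((a+b)/2) ≤ projNorm ![a,b,c] := le_csSup hbdd ⟨(a+b)/2, m1, rfl⟩
  have le2 : L ((b+c)/2) ≤ projNorm ![a,b,c] := le_csSup hbdd ⟨(b+c)/2, m2, rfl⟩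
  have low : ∀ x : ℝ, 1 - 2 * lag ![a,b,c] 2 x ≤ L x ∧ 1 - 2 * lag ![a,b,c] 0 x ≤ L x := by
    intro x
    have hs := lag_sum a b c x hab' hac' hbc'
    have := le_abs_self (lag ![a,b,c] 0 x)
    have := le_abs_self (lag ![a,b,c] 1 x)
    have := le_abs_self (lag ![a,b,c] 2 x)
    have := neg_abs_le (lag ![a,b,c] 0 x)
    have := neg_abs_le (lag ![a,b,c] 2 x)
    have hLx : L x = |lag ![a,b,c] 0 x| + |lag ![a,b,c] 1 x| + |lag ![a,b,c] 2 x| := by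
      rw [hL]; exact Fin.sum_univ_three _
    constructor <;> (rw [hLx]; linarith)
  have n1 : b - a ≠ 0 := hu.ne'
  have n2 : c - b ≠ 0 := hv.ne'
  have n3 : c - a ≠ 0 := hw.ne'
  have n4 : a - b ≠ 0 := sub_ne_zero.mpr hab'
  have n5 : a - c ≠ 0 := sub_ne_zero.mpr hac'
  have n6 : b - c ≠ 0 := sub_ne_zero.mpr hbc'
  have e2 : lag ![a,b,c] 2 ((a+b)/2) * (4*((c-a)*(c-b))) = -((b-a)^2) := by
    rw [lag_two]
    field_simp
    ring
  have e0 : lag ![a,b,c] 0 ((b+c)/2) * (4*((b-a)*(c-a))) = -((c-b)^2) := by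
    rw [lag_zero]
    field_simp
    ring
  set P := projNorm ![a,b,c] with hP
  have r1 : -2 * lag ![a,b,c] 2 ((a+b)/2) ≤ P - 1 := by
    have := (low ((a+b)/2)).1; linarith
  have r2 : -2 * lag ![a,b,c] 0 ((b+c)/2) ≤ P - 1 := by
    have := (low ((b+c)/2)).2; linarith
  have k1 : (b-a)^2 ≤ (P - 1) * (2*((c-a)*(c-b))) := by
    have h := mul_le_mul_of_nonneg_right r1 (by positivity : (0:ℝ) ≤ 2*((c-a)*(c-b)))
    have he : -2 * lag ![a,b,c] 2 ((a+b)/2) * (2*((c-a)*(c-b))) = (b-a)^2 := by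
      linear_combination -e2
    linarith [he ▸ h]
  have k2 : (c-b)^2 ≤ (P - 1) * (2*((b-a)*(c-a))) := by
    have h := mul_le_mul_of_nonneg_right r2 (by positivity : (0:ℝ) ≤ 2*((b-a)*(c-a)))
    have he : -2 * lag ![a,b,c] 0 ((b+c)/2) * (2*((b-a)*(c-a))) = (c-b)^2 := by
      linear_combination -e0
    linarith [he ▸ h]
  nlinarith [sq_nonneg ((b-a)-(c-b)), sq_nonneg ((b-a)+(c-b)), mul_pos hu hv, mul_pos hu hw,
    mul_pos hv hw]

/-! ### Auxiliary lemmas: the scaled simplex and absorption -/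

lemma centroid3 (v : Fin 3 → Fin 2 → ℝ) :
    Finset.univ.centroid ℝ v = (3:ℝ)⁻¹ • (v 0 + v 1 + v 2) := by
  rw [Finset.centroid_def, Finset.affineCombination_eq_linear_combination _ _ _
    (Finset.sum_centroidWeights_eq_one_of_nonempty ℝ _ ⟨0, Finset.mem_univ 0⟩)]
  simp [Finset.centroidWeights, Fin.sum_univ_three, smul_add]

lemma scaledSimplex_eq {n : ℕ} (v : Fin (n+1) → (Fin n → ℝ)) (σ : ℝ) :
    scaledSimplex v σ = convexHull ℝ (Set.range
      (fun j => σ • (v j - Finset.univ.centroid ℝ v) + Finset.univ.centroid ℝ v)) := by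
  rw [scaledSimplex, simplexHull, (AffineMap.homothety _ σ).image_convexHull, ← Set.range_comp]
  refine congrArg _ (congrArg Set.range (funext fun j => ?_))
  simp only [Function.comp_apply, AffineMap.homothety_apply, vsub_eq_sub, vadd_eq_add]

set_option maxHeartbeats 1000000 in
lemma mem_scaled_iff (p q r σ x : ℝ) (hpq : p ≠ q) (hpr : p ≠ r) (hqr : q ≠ r) (hσ : 0 < σ)
    (v : Fin 3 → Fin 2 → ℝ) (hv0 : v 0 = ![p, p^2]) (hv1 : v 1 = ![q, q^2])
    (hv2 : v 2 = ![r, r^2]) :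
    ![x, x^2] ∈ scaledSimplex v σ ↔
      ((1-σ)/3 ≤ (x-q)*(x-r)/((p-q)*(p-r)) ∧ (1-σ)/3 ≤ (x-p)*(x-r)/((q-p)*(q-r)) ∧
       (1-σ)/3 ≤ (x-p)*(x-q)/((r-p)*(r-q))) := by
  have hv : v = ![![p, p^2], ![q, q^2], ![r, r^2]] := by
    funext j; fin_cases j <;> assumption
  have hpq' : p - q ≠ 0 := sub_ne_zero.mpr hpq
  have hpr' : p - r ≠ 0 := sub_ne_zero.mpr hpr
  have hqr' : q - r ≠ 0 := sub_ne_zero.mpr hqr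
  have hqp' : q - p ≠ 0 := sub_ne_zero.mpr hpq.symm
  have hrp' : r - p ≠ 0 := sub_ne_zero.mpr hpr.symm
  have hrq' : r - q ≠ 0 := sub_ne_zero.mpr hqr.symm
  have hσ' : σ ≠ 0 := ne_of_gt hσ
  rw [scaledSimplex_eq, centroid3, hv, convexHull_range_eq_exists_affineCombination]
  constructor
  · rintro ⟨s, μ, h0, h1, hcomb⟩
    rw [Finset.affineCombination_indicator_subset μ _ (Finset.subset_univ s)] at hcomb
    have hsum : ∑ j, Set.indicator (↑s) μ j = 1 := by
      rw [Finset.sum_indicator_subset μ (Finset.subset_univ s)]; exact h1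
    rw [Finset.affineCombination_eq_linear_combination _ _ _ hsum] at hcomb
    set A := Set.indicator (↑s) μ 0 with hA
    set B := Set.indicator (↑s) μ 1 with hB
    set C := Set.indicator (↑s) μ 2 with hC
    have hA0 : 0 ≤ A := Set.indicator_nonneg (fun i hi => h0 i hi) _
    have hB0 : 0 ≤ B := Set.indicator_nonneg (fun i hi => h0 i hi) _
    have hC0 : 0 ≤ C := Set.indicator_nonneg (fun i hi => h0 i hi) _
    have hsum3 : A + B + C = 1 := by rw [Fin.sum_univ_three] at hsum; exact hsum
    have e0 := congrFun hcomb 0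
    have e1 := congrFun hcomb 1
    simp only [Fin.sum_univ_succ, Fin.sum_univ_zero, Pi.add_apply, Pi.smul_apply, Pi.sub_apply,
      smul_eq_mul, Matrix.cons_val_zero, Matrix.cons_val_one, Matrix.cons_val_two, Matrix.head_cons,
      Matrix.vecHead, Matrix.vecTail, Matrix.cons_val_succ, Finset.sum_apply, add_zero,
      Function.comp_apply, Fin.succ_zero_eq_one, Fin.succ_one_eq_two] at e0 e1
    have hsum' : A + B + C = 1 := hsum3
    have key0 : (x-q)*(x-r) = ((1-σ)/3 + σ*A) * ((p-q)*(p-r)) := by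
      linear_combination -e1 + (q+r)*e0 - (q*r - (1-σ)*((p-q)*(p-r))/3) * hsum'
    have key1 : (x-p)*(x-r) = ((1-σ)/3 + σ*B) * ((q-p)*(q-r)) := by
      linear_combination -e1 + (p+r)*e0 - (p*r - (1-σ)*((q-p)*(q-r))/3) * hsum'
    have key2 : (x-p)*(x-q) = ((1-σ)/3 + σ*C) * ((r-p)*(r-q)) := by
      linear_combination -e1 + (p+q)*e0 - (p*q - (1-σ)*((r-p)*(r-q))/3) * hsum'
    refine ⟨?_, ?_, ?_⟩
    · have hd : (x-q)*(x-r)/((p-q)*(p-r)) = (1-σ)/3 + σ*A := by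
        rw [key0]; field_simp
      rw [hd]; linarith [mul_nonneg hσ.le hA0]
    · have hd : (x-p)*(x-r)/((q-p)*(q-r)) = (1-σ)/3 + σ*B := by
        rw [key1]; field_simp
      rw [hd]; linarith [mul_nonneg hσ.le hB0]
    · have hd : (x-p)*(x-q)/((r-p)*(r-q)) = (1-σ)/3 + σ*C := by
        rw [key2]; field_simp
      rw [hd]; linarith [mul_nonneg hσ.le hC0]
  · rintro ⟨h0, h1, h2⟩
    set μf : Fin 3 → ℝ := ![((x-q)*(x-r)/((p-q)*(p-r)) - (1-σ)/3)/σ,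
      ((x-p)*(x-r)/((q-p)*(q-r)) - (1-σ)/3)/σ,
      ((x-p)*(x-q)/((r-p)*(r-q)) - (1-σ)/3)/σ] with hμf
    have hs1 : ∑ j, μf j = 1 := by
      rw [Fin.sum_univ_three, hμf]
      simp only [Matrix.cons_val_zero, Matrix.cons_val_one, Matrix.cons_val_two, Matrix.head_cons,
        Matrix.vecHead, Matrix.vecTail, Function.comp_apply, Fin.succ_zero_eq_one]
      field_simp
      ring
    refine ⟨Finset.univ, μf, ?_, hs1, ?_⟩
    · intro i _
      fin_cases i
      · exact div_nonneg (by simp [hμf]; linarith) hσ.le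
      · exact div_nonneg (by simp [hμf]; linarith) hσ.le
      · exact div_nonneg (by simp [hμf]; linarith) hσ.le
    · rw [Finset.affineCombination_eq_linear_combination _ _ _ hs1]
      funext i
      rw [Finset.sum_apply]
      fin_cases i
      · simp only [Fin.sum_univ_succ, Fin.sum_univ_zero, Pi.add_apply, Pi.smul_apply, Pi.sub_apply,
          smul_eq_mul, Matrix.cons_val_zero, Matrix.cons_val_one, Matrix.cons_val_two,
          Matrix.head_cons, Matrix.vecHead, Matrix.vecTail, Matrix.cons_val_succ, add_zero,
          Function.comp_apply, Fin.succ_zero_eq_one, Fin.succ_one_eq_two, hμf, Fin.zero_eta, Fin.mk_one]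
        field_simp
        ring
      · simp only [Fin.sum_univ_succ, Fin.sum_univ_zero, Pi.add_apply, Pi.smul_apply, Pi.sub_apply,
          smul_eq_mul, Matrix.cons_val_zero, Matrix.cons_val_one, Matrix.cons_val_two,
          Matrix.head_cons, Matrix.vecHead, Matrix.vecTail, Matrix.cons_val_succ, add_zero,
          Function.comp_apply, Fin.succ_zero_eq_one, Fin.succ_one_eq_two, hμf, Fin.zero_eta, Fin.mk_one]
        field_simp
        ring

lemma xi_ge (a b c σ : ℝ) (ha : -1 ≤ a) (hc : c ≤ 1) (hab : a < b) (hbc : b < c)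
    (h1 : ∀ x ∈ Set.Icc (-1:ℝ) 1, (1-σ)/3 ≤ (x-b)*(x-c)/((a-b)*(a-c)))
    (h3 : ∀ x ∈ Set.Icc (-1:ℝ) 1, (1-σ)/3 ≤ (x-a)*(x-b)/((c-a)*(c-b))) : 11/8 ≤ σ := by
  have hu : 0 < b - a := sub_pos.mpr hab
  have hv : 0 < c - b := sub_pos.mpr hbc
  have hw : 0 < c - a := sub_pos.mpr (hab.trans hbc)
  have hD1 : 0 < (a-b)*(a-c) := by nlinarith
  have hD3 : 0 < (c-a)*(c-b) := by nlinarith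
  have k1 := (le_div_iff₀ hD1).mp (h1 ((b+c)/2) ⟨by linarith, by linarith⟩)
  have k3 := (le_div_iff₀ hD3).mp (h3 ((a+b)/2) ⟨by linarith, by linarith⟩)
  by_contra hcon
  push_neg at hcon
  nlinarith [sq_nonneg ((b-a)-(c-b)), mul_pos hu hv, mul_pos hu hw, mul_pos hv hw]

lemma lag_lb (p q r x : ℝ) (hq : q ∈ Set.Icc (-1:ℝ) 1) (hr : r ∈ Set.Icc (-1:ℝ) 1)
    (hx : x ∈ Set.Icc (-1:ℝ) 1) (hD : (p-q)*(p-r) ≠ 0) :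
    -(4/|(p-q)*(p-r)|) ≤ (x-q)*(x-r)/((p-q)*(p-r)) := by
  obtain ⟨hx1, hx2⟩ := hx
  obtain ⟨hq1, hq2⟩ := hq
  obtain ⟨hr1, hr2⟩ := hr
  have hxq : |x - q| ≤ 2 := by rw [abs_sub_le_iff]; constructor <;> linarith
  have hxr : |x - r| ≤ 2 := by rw [abs_sub_le_iff]; constructor <;> linarith
  have hN : |(x-q)*(x-r)| ≤ 4 := by
    rw [abs_mul]
    calc |x - q| * |x - r| ≤ 2*2 := mul_le_mul hxq hxr (abs_nonneg _) (by norm_num)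
      _ = 4 := by norm_num
  have hDpos : 0 < |(p-q)*(p-r)| := abs_pos.mpr hD
  have h1 : -((x-q)*(x-r)/((p-q)*(p-r))) ≤ 4/|(p-q)*(p-r)| := by
    calc -((x-q)*(x-r)/((p-q)*(p-r))) ≤ |(x-q)*(x-r)/((p-q)*(p-r))| := neg_le_abs _
      _ = |(x-q)*(x-r)|/|(p-q)*(p-r)| := abs_div _ _
      _ ≤ 4/|(p-q)*(p-r)| := by gcongr
  linarith

/-- The absorption set is nonempty for any inscribed triangle with distinct nodes. -/
lemma abs_set_nonempty (p q r : ℝ) (hp : p ∈ Set.Icc (-1:ℝ) 1) (hq : q ∈ Set.Icc (-1:ℝ) 1)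
    (hr : r ∈ Set.Icc (-1:ℝ) 1) (hpq : p ≠ q) (hpr : p ≠ r) (hqr : q ≠ r)
    (v : Fin 3 → Fin 2 → ℝ) (hv0 : v 0 = ![p, p^2]) (hv1 : v 1 = ![q, q^2])
    (hv2 : v 2 = ![r, r^2]) :
    ∃ σ : ℝ, 1 ≤ σ ∧ ((fun x : ℝ => ![x, x^2]) '' Set.Icc (-1) 1) ⊆ scaledSimplex v σ := by
  have hpq' : p - q ≠ 0 := sub_ne_zero.mpr hpq
  have hpr' : p - r ≠ 0 := sub_ne_zero.mpr hpr
  have hqr' : q - r ≠ 0 := sub_ne_zero.mpr hqr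
  have hqp' : q - p ≠ 0 := sub_ne_zero.mpr hpq.symm
  have hrp' : r - p ≠ 0 := sub_ne_zero.mpr hpr.symm
  have hrq' : r - q ≠ 0 := sub_ne_zero.mpr hqr.symm
  have hD1 : (p-q)*(p-r) ≠ 0 := mul_ne_zero hpq' hpr'
  have hD2 : (q-p)*(q-r) ≠ 0 := mul_ne_zero hqp' hqr'
  have hD3 : (r-p)*(r-q) ≠ 0 := mul_ne_zero hrp' hrq'
  set K1 : ℝ := 4/|(p-q)*(p-r)| with hK1
  set K2 : ℝ := 4/|(q-p)*(q-r)| with hK2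
  set K3 : ℝ := 4/|(r-p)*(r-q)| with hK3
  have hK1p : 0 < K1 := by rw [hK1]; positivity
  have hK2p : 0 < K2 := by rw [hK2]; positivity
  have hK3p : 0 < K3 := by rw [hK3]; positivity
  refine ⟨1 + 3*(K1 + K2 + K3), by linarith, ?_⟩
  rw [Set.image_subset_iff]
  intro x hx
  rw [Set.mem_preimage]
  rw [mem_scaled_iff p q r _ x hpq hpr hqr (by linarith) v hv0 hv1 hv2]
  have hc : (1 - (1 + 3*(K1 + K2 + K3)))/3 = -(K1 + K2 + K3) := by ring
  rw [hc]
  refine ⟨?_, ?_, ?_⟩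
  · have := lag_lb p q r x hq hr hx hD1; rw [← hK1] at this; linarith
  · have := lag_lb q p r x hp hr hx hD2; rw [← hK2] at this; linarith
  · have := lag_lb r p q x hp hq hx hD3; rw [← hK3] at this; linarith

lemma absCoef_ge (v : Fin 3 → Fin 2 → ℝ)
    (hmem : ∀ j, v j ∈ (fun x : ℝ => ![x, x^2]) '' Set.Icc (-1) 1)
    (hAI : AffineIndependent ℝ v) :
    11/8 ≤ absCoef ((fun x : ℝ => ![x, x^2]) '' Set.Icc (-1) 1) v := by
  obtain ⟨p, hp, hv0⟩ := hmem 0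
  obtain ⟨q, hq, hv1⟩ := hmem 1
  obtain ⟨r, hr, hv2⟩ := hmem 2
  have hv0' : v 0 = ![p, p^2] := hv0.symm
  have hv1' : v 1 = ![q, q^2] := hv1.symm
  have hv2' : v 2 = ![r, r^2] := hv2.symm
  have hpq : p ≠ q := by
    intro h
    have : v 0 = v 1 := by rw [hv0', hv1', h]
    exact absurd (hAI.injective this) (by decide)
  have hpr : p ≠ r := by
    intro h
    have : v 0 = v 2 := by rw [hv0', hv2', h]
    exact absurd (hAI.injective this) (by decide)
  have hqr : q ≠ r := by
    intro h
    have : v 1 = v 2 := by rw [hv1', hv2', h]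
    exact absurd (hAI.injective this) (by decide)
  rw [absCoef]
  refine le_csInf ?_ ?_
  · obtain ⟨σ, h1, h2⟩ := abs_set_nonempty p q r hp hq hr hpq hpr hqr v hv0' hv1' hv2'
    exact ⟨σ, h1, h2⟩
  rintro σ ⟨hσ1, hsub⟩
  have hσ0 : (0:ℝ) < σ := by linarith
  have hall : ∀ x ∈ Set.Icc (-1:ℝ) 1,
      ((1-σ)/3 ≤ (x-q)*(x-r)/((p-q)*(p-r)) ∧ (1-σ)/3 ≤ (x-p)*(x-r)/((q-p)*(q-r)) ∧
       (1-σ)/3 ≤ (x-p)*(x-q)/((r-p)*(r-q))) := by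
    intro x hx
    exact (mem_scaled_iff p q r σ x hpq hpr hqr hσ0 v hv0' hv1' hv2').mp
      (hsub (Set.mem_image_of_mem _ hx))
  rcases hpq.lt_or_gt with h1 | h1
  · rcases hqr.lt_or_gt with h2 | h2
    · -- p < q < r
      refine xi_ge p q r σ hp.1 hr.2 h1 h2 (fun x hx => (hall x hx).1)
        (fun x hx => ?_)
      calc (1-σ)/3 ≤ (x-p)*(x-q)/((r-p)*(r-q)) := (hall x hx).2.2
        _ = (x-p)*(x-q)/((r-p)*(r-q)) := rfl
    · rcases hpr.lt_or_gt with h3 | h3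
      · -- p < r < q
        refine xi_ge p r q σ hp.1 hq.2 h3 h2 (fun x hx => ?_) (fun x hx => ?_)
        · calc (1-σ)/3 ≤ (x-q)*(x-r)/((p-q)*(p-r)) := (hall x hx).1
            _ = (x-r)*(x-q)/((p-r)*(p-q)) := by ring
        · calc (1-σ)/3 ≤ (x-p)*(x-r)/((q-p)*(q-r)) := (hall x hx).2.1
            _ = (x-p)*(x-r)/((q-p)*(q-r)) := rfl
      · -- r < p < q
        refine xi_ge r p q σ hr.1 hq.2 h3 h1 (fun x hx => ?_) (fun x hx => ?_)
        · calc (1-σ)/3 ≤ (x-p)*(x-q)/((r-p)*(r-q)) := (hall x hx).2.2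
            _ = (x-p)*(x-q)/((r-p)*(r-q)) := rfl
        · calc (1-σ)/3 ≤ (x-p)*(x-r)/((q-p)*(q-r)) := (hall x hx).2.1
            _ = (x-r)*(x-p)/((q-r)*(q-p)) := by ring
  · rcases hpr.lt_or_gt with h3 | h3
    · -- q < p < r
      refine xi_ge q p r σ hq.1 hr.2 h1 h3 (fun x hx => ?_) (fun x hx => ?_)
      · calc (1-σ)/3 ≤ (x-p)*(x-r)/((q-p)*(q-r)) := (hall x hx).2.1
          _ = (x-p)*(x-r)/((q-p)*(q-r)) := rfl
      · calc (1-σ)/3 ≤ (x-p)*(x-q)/((r-p)*(r-q)) := (hall x hx).2.2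
          _ = (x-q)*(x-p)/((r-q)*(r-p)) := by ring
    · rcases hqr.lt_or_gt with h2 | h2
      · -- q < r < p
        refine xi_ge q r p σ hq.1 hp.2 h2 h3 (fun x hx => ?_) (fun x hx => ?_)
        · calc (1-σ)/3 ≤ (x-p)*(x-r)/((q-p)*(q-r)) := (hall x hx).2.1
            _ = (x-r)*(x-p)/((q-r)*(q-p)) := by ring
        · calc (1-σ)/3 ≤ (x-q)*(x-r)/((p-q)*(p-r)) := (hall x hx).1
            _ = (x-q)*(x-r)/((p-q)*(p-r)) := rfl
      · -- r < q < p
        refine xi_ge r q p σ hr.1 hp.2 h2 h1 (fun x hx => ?_) (fun x hx => ?_)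
        · calc (1-σ)/3 ≤ (x-p)*(x-q)/((r-p)*(r-q)) := (hall x hx).2.2
            _ = (x-q)*(x-p)/((r-q)*(r-p)) := by ring
        · calc (1-σ)/3 ≤ (x-q)*(x-r)/((p-q)*(p-r)) := (hall x hx).1
            _ = (x-r)*(x-q)/((p-r)*(p-q)) := by ring

/-! ### The optimal triangle -/

noncomputable def vopt : Fin 3 → Fin 2 → ℝ := ![![-1, 1], ![0, 0], ![1, 1]]

lemma vopt0 : vopt 0 = ![(-1:ℝ), (-1)^2] := by
  funext i; fin_cases i <;> norm_num [vopt]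

lemma vopt1 : vopt 1 = ![(0:ℝ), 0^2] := by
  funext i; fin_cases i <;> norm_num [vopt]

lemma vopt2 : vopt 2 = ![(1:ℝ), 1^2] := by
  funext i; fin_cases i <;> norm_num [vopt, Matrix.cons_val_two, Matrix.vecHead, Matrix.vecTail]

lemma vopt_ai : AffineIndependent ℝ vopt := by
  rw [vopt, affineIndependent_iff_not_collinear]
  intro hcol
  obtain ⟨u, hu⟩ := (collinear_iff_of_mem
    (show ![(0:ℝ),0] ∈ Set.range ![![(-1:ℝ),1], ![0,0], ![1,1]] from ⟨1, rfl⟩)).mp hcol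
  obtain ⟨s, hs⟩ := hu ![-1,1] ⟨0, rfl⟩
  obtain ⟨t, ht⟩ := hu ![1,1] ⟨2, rfl⟩
  have e1 := congrFun hs 0
  have e2 := congrFun hs 1
  have e3 := congrFun ht 0
  have e4 := congrFun ht 1
  simp only [vadd_eq_add, Pi.add_apply, Pi.smul_apply, smul_eq_mul, Matrix.cons_val_zero,
    Matrix.cons_val_one, Matrix.head_cons, add_zero] at e1 e2 e3 e4
  have key : (s * u 0) * (t * u 1) = (s * u 1) * (t * u 0) := by ring
  rw [← e1, ← e2, ← e3, ← e4] at key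
  norm_num at key

lemma absCoef_opt :
    absCoef ((fun x : ℝ => ![x, x^2]) '' Set.Icc (-1) 1) vopt = 11/8 := by
  have hset : {σ : ℝ | 1 ≤ σ ∧ ((fun x : ℝ => ![x, x^2]) '' Set.Icc (-1) 1) ⊆
      scaledSimplex vopt σ} = Set.Ici (11/8 : ℝ) := by
    ext σ
    simp only [Set.mem_setOf_eq, Set.mem_Ici]
    constructor
    · rintro ⟨hσ1, hsub⟩
      have hσ0 : (0:ℝ) < σ := by linarith
      have hmem : ![(1/2:ℝ), (1/2)^2] ∈ scaledSimplex vopt σ := by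
        apply hsub
        exact ⟨1/2, by norm_num, rfl⟩
      rw [mem_scaled_iff (-1) 0 1 σ (1/2) (by norm_num) (by norm_num) (by norm_num) hσ0 vopt
        vopt0 vopt1 vopt2] at hmem
      obtain ⟨hA, _, _⟩ := hmem
      norm_num at hA
      linarith
    · intro hσ
      have hσ0 : (0:ℝ) < σ := by linarith
      refine ⟨by linarith, ?_⟩
      rw [Set.image_subset_iff]
      intro x hx
      rw [Set.mem_preimage, mem_scaled_iff (-1) 0 1 σ x (by norm_num) (by norm_num) (by norm_num)
        hσ0 vopt vopt0 vopt1 vopt2]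
      obtain ⟨hx1, hx2⟩ := hx
      refine ⟨?_, ?_, ?_⟩
      · rw [show ((-1:ℝ)-0)*((-1)-1) = 2 by norm_num]
        rw [le_div_iff₀ (by norm_num : (0:ℝ) < 2)]
        nlinarith [sq_nonneg (x - 1/2)]
      · rw [show ((0:ℝ)-(-1))*(0-1) = -1 by norm_num,
          show (x-(-1))*(x-1)/(-1 : ℝ) = (1+x)*(1-x) by ring]
        have hprod : (0:ℝ) ≤ (1+x)*(1-x) :=
          mul_nonneg (by linarith) (by linarith)
        linarith
      · rw [show ((1:ℝ)-(-1))*(1-0) = 2 by norm_num]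
        rw [le_div_iff₀ (by norm_num : (0:ℝ) < 2)]
        nlinarith [sq_nonneg (x + 1/2)]
  rw [absCoef, hset, csInf_Ici]

theorem quadratic_theta_xi_equality
    (θ ξ : ℝ)
    (hθ : θ = sInf {p : ℝ | ∃ a b c : ℝ, a ∈ Set.Icc (-1:ℝ) 1 ∧ b ∈ Set.Icc (-1:ℝ) 1 ∧
        c ∈ Set.Icc (-1:ℝ) 1 ∧ a < b ∧ b < c ∧ p = projNorm ![a, b, c]})
    (hξ : ξ = sInf {t : ℝ | ∃ v : Fin 3 → (Fin 2 → ℝ),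
        (∀ j, v j ∈ (fun x : ℝ => ![x, x^2]) '' Set.Icc (-1) 1) ∧ AffineIndependent ℝ v ∧
        t = absCoef ((fun x : ℝ => ![x, x^2]) '' Set.Icc (-1) 1) v}) :
    θ = 5/4 ∧ ξ = 11/8 ∧ ξ = (3/2) * (θ - 1) + 1 := by
  have hθmem : (5/4 : ℝ) ∈ {p : ℝ | ∃ a b c : ℝ, a ∈ Set.Icc (-1:ℝ) 1 ∧ b ∈ Set.Icc (-1:ℝ) 1 ∧
      c ∈ Set.Icc (-1:ℝ) 1 ∧ a < b ∧ b < c ∧ p = projNorm ![a, b, c]} :=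
    ⟨-1, 0, 1, by norm_num, by norm_num, by norm_num, by norm_num, by norm_num,
      projNorm_opt.symm⟩
  have hθlb : ∀ s ∈ {p : ℝ | ∃ a b c : ℝ, a ∈ Set.Icc (-1:ℝ) 1 ∧ b ∈ Set.Icc (-1:ℝ) 1 ∧
      c ∈ Set.Icc (-1:ℝ) 1 ∧ a < b ∧ b < c ∧ p = projNorm ![a, b, c]}, 5/4 ≤ s := by
    rintro s ⟨a, b, c, ha, hb, hc, hab, hbc, rfl⟩
    exact projNorm_ge a b c ha.1 hc.2 hab hbc
  have hθv : θ = 5/4 := by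
    rw [hθ]
    exact le_antisymm (csInf_le ⟨5/4, fun s hs => hθlb s hs⟩ hθmem)
      (le_csInf ⟨_, hθmem⟩ hθlb)
  have hξmem : (11/8 : ℝ) ∈ {t : ℝ | ∃ v : Fin 3 → (Fin 2 → ℝ),
      (∀ j, v j ∈ (fun x : ℝ => ![x, x^2]) '' Set.Icc (-1) 1) ∧ AffineIndependent ℝ v ∧
      t = absCoef ((fun x : ℝ => ![x, x^2]) '' Set.Icc (-1) 1) v} := by
    refine ⟨vopt, ?_, vopt_ai, absCoef_opt.symm⟩
    intro j
    fin_cases j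
    · exact ⟨-1, by norm_num, vopt0.symm⟩
    · exact ⟨0, by norm_num, vopt1.symm⟩
    · exact ⟨1, by norm_num, vopt2.symm⟩
  have hξlb : ∀ s ∈ {t : ℝ | ∃ v : Fin 3 → (Fin 2 → ℝ),
      (∀ j, v j ∈ (fun x : ℝ => ![x, x^2]) '' Set.Icc (-1) 1) ∧ AffineIndependent ℝ v ∧
      t = absCoef ((fun x : ℝ => ![x, x^2]) '' Set.Icc (-1) 1) v}, 11/8 ≤ s := by
    rintro s ⟨v, hmem, hAI, rfl⟩
    exact absCoef_ge v hmem hAI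
  have hξv : ξ = 11/8 := by
    rw [hξ]
    exact le_antisymm (csInf_le ⟨11/8, fun s hs => hξlb s hs⟩ hξmem)
      (le_csInf ⟨_, hξmem⟩ hξlb)
  refine ⟨hθv, hξv, ?_⟩
  rw [hθv, hξv]
  norm_num
end
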